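/- arXiv:2506.12660 — 6 statements merged into one kernel-verified Lean document; each statement's English description precedes it below -/
import Mathlib

section
/- No minimal imperfect graph contains a clique cutset. That is, if a graph G is not perfect but every proper induced subgraph of G is perfect, then G has no clique cutset. -/
open SimpleGraph

lemma cliqueNum_le_of_embedding {α β : Type*} [Fintype α] [Fintype β]
    {G : SimpleGraph α} {H : SimpleGraph β} (f : G ↪g H) :
    G.cliqueNum ≤ H.cliqueNum := by
  classical
  obtain ⟨s, hs⟩ := G.exists_isNClique_cliqueNum
  have hcl : H.IsClique (↑(s.map f.toEmbedding) : Set β) := by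
    intro x hx y hy hxy
    simp only [Finset.coe_map, Set.mem_image, Finset.mem_coe] at hx hy
    obtain ⟨a, ha, rfl⟩ := hx
    obtain ⟨b, hb, rfl⟩ := hy
    exact f.map_adj_iff.mpr (hs.isClique ha hb (fun h => hxy (by rw [h])))
  calc G.cliqueNum = (s.map f.toEmbedding).card := by simp [hs.card_eq]
    _ ≤ H.cliqueNum := hcl.card_le_cliqueNum

lemma cliqueNum_eq_of_iso {α β : Type*} [Fintype α] [Fintype β]
    {G : SimpleGraph α} {H : SimpleGraph β} (f : G ≃g H) :
    G.cliqueNum = H.cliqueNum :=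
  le_antisymm (cliqueNum_le_of_embedding f.toEmbedding)
    (cliqueNum_le_of_embedding f.symm.toEmbedding)

lemma chromaticNumber_eq_of_iso {α β : Type*}
    {G : SimpleGraph α} {H : SimpleGraph β} (f : G ≃g H) :
    G.chromaticNumber = H.chromaticNumber :=
  le_antisymm (chromaticNumber_mono_of_hom f.toEmbedding.toHom)
    (chromaticNumber_mono_of_hom f.symm.toEmbedding.toHom)

lemma cliqueNum_le_chromaticNumber' {α : Type*} [Fintype α] (G : SimpleGraph α) :
    (G.cliqueNum : ℕ∞) ≤ G.chromaticNumber := by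
  classical
  obtain ⟨s, hs⟩ := G.exists_isNClique_cliqueNum
  have := hs.isClique.card_le_chromaticNumber
  rwa [hs.card_eq] at this

/-- A graph is perfect if every induced subgraph has chromatic number equal to
its clique number. -/
def IsPerfect {W : Type*} (G : SimpleGraph W) : Prop :=
  ∀ s : Set W, (G.induce s).chromaticNumber = ((G.induce s).cliqueNum : ℕ∞)

lemma IsPerfect.chromaticNumber_eq {W : Type*} [Fintype W] {G : SimpleGraph W}
    (h : IsPerfect G) : G.chromaticNumber = (G.cliqueNum : ℕ∞) := by
  classical
  have := h Set.univ
  rwa [chromaticNumber_eq_of_iso G.induceUnivIso, cliqueNum_eq_of_iso G.induceUnivIso] at this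

/-- `(A, B)` is a good partition of the induced subgraph `G[s]`:
`A` and `B` partition `s`, `G[A]` is perfect and `ω(G[B]) < ω(G[s])`. -/
def GoodPartition {W : Type*} (G : SimpleGraph W) (s A B : Set W) : Prop :=
  A ∪ B = s ∧ Disjoint A B ∧ IsPerfect (G.induce A) ∧
    (G.induce B).cliqueNum < (G.induce s).cliqueNum

/-- A graph is perfectly divisible if every induced subgraph with at least one
edge admits a good partition. -/
def PerfectlyDivisible {W : Type*} (G : SimpleGraph W) : Prop :=
  ∀ s : Set W, (G.induce s).edgeSet.Nonempty → ∃ A B : Set W, GoodPartition G s A B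

/-- A graph is minimally non-perfectly divisible if it is not perfectly
divisible but every proper induced subgraph is. -/
def MNPD {W : Type*} (G : SimpleGraph W) : Prop :=
  ¬ PerfectlyDivisible G ∧ ∀ s : Set W, s ≠ Set.univ → PerfectlyDivisible (G.induce s)

/-- `C` is a clique cutset of `G`: `C` is a clique and `G - C` is disconnected,
i.e. the remaining vertices split into two nonempty parts with no edges between them. -/
def IsCliqueCutset {W : Type*} (G : SimpleGraph W) (C : Set W) : Prop :=
  G.IsClique C ∧ ∃ V1 V2 : Set W, V1.Nonempty ∧ V2.Nonempty ∧ Disjoint V1 V2 ∧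
    V1 ∪ V2 = Cᶜ ∧ ∀ x ∈ V1, ∀ y ∈ V2, ¬ G.Adj x y


/-- No minimal imperfect graph contains a clique cutset. -/
theorem no_clique_cutset_in_minimal_imperfect {V : Type*} [Fintype V] (G : SimpleGraph V)
    (himp : ¬ IsPerfect G)
    (hmin : ∀ s : Set V, s ≠ Set.univ → IsPerfect (G.induce s)) :
    ∀ C : Set V, ¬ IsCliqueCutset G C := by
  classical
  rintro C ⟨hC, V1, V2, ⟨v1, hv1⟩, ⟨v2, hv2⟩, hdis, hunion, hsep⟩
  set k := G.cliqueNum with hk_def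
  -- basic membership facts
  have hV1C : V1 ⊆ Cᶜ := hunion ▸ Set.subset_union_left
  have hV2C : V2 ⊆ Cᶜ := hunion ▸ Set.subset_union_right
  set S1 : Set V := V1 ∪ C with hS1_def
  set S2 : Set V := V2 ∪ C with hS2_def
  have hS1ne : S1 ≠ Set.univ := by
    intro h
    have : v2 ∈ S1 := h ▸ Set.mem_univ v2
    rcases this with h' | h'
    · exact (Set.disjoint_left.mp hdis h') hv2
    · exact hV2C hv2 h'
  have hS2ne : S2 ≠ Set.univ := by
    intro h
    have : v1 ∈ S2 := h ▸ Set.mem_univ v1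
    rcases this with h' | h'
    · exact (Set.disjoint_left.mp hdis hv1) h'
    · exact hV1C hv1 h'
  -- k ≥ 1
  have hk : 0 < k := by
    have hclv : G.IsClique (↑({v2} : Finset V) : Set V) := by simp
    have := hclv.card_le_cliqueNum
    have h1 : 1 ≤ G.cliqueNum := by simpa using this
    rw [hk_def]; omega
  -- both sides are perfect, hence colorable with k colors
  have hcol : ∀ S : Set V, S ≠ Set.univ → (G.induce S).Colorable k := by
    intro S hSne
    have hperf := (hmin S hSne).chromaticNumber_eq
    have hω : (G.induce S).cliqueNum ≤ k := cliqueNum_le_of_embedding (Embedding.induce S)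
    have : (G.induce S).chromaticNumber ≤ (k : ℕ∞) := by
      rw [hperf]; exact_mod_cast hω
    exact chromaticNumber_le_iff_colorable.mp this
  obtain ⟨c1⟩ := hcol S1 hS1ne
  obtain ⟨c2⟩ := hcol S2 hS2ne
  have hCS1 : C ⊆ S1 := Set.subset_union_right
  have hCS2 : C ⊆ S2 := Set.subset_union_right
  -- extend colorings to all of V
  set f1 : V → Fin k := fun v => if h : v ∈ S1 then c1 ⟨v, h⟩ else ⟨0, hk⟩ with hf1_def
  set f2 : V → Fin k := fun v => if h : v ∈ S2 then c2 ⟨v, h⟩ else ⟨0, hk⟩ with hf2_def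
  have hf1 : ∀ {u v : V}, u ∈ S1 → v ∈ S1 → G.Adj u v → f1 u ≠ f1 v := by
    intro u v hu hv hadj
    simp only [hf1_def, dif_pos hu, dif_pos hv]
    exact c1.valid (by exact hadj)
  have hf2 : ∀ {u v : V}, u ∈ S2 → v ∈ S2 → G.Adj u v → f2 u ≠ f2 v := by
    intro u v hu hv hadj
    simp only [hf2_def, dif_pos hu, dif_pos hv]
    exact c2.valid (by exact hadj)
  have inj1 : Set.InjOn f1 C := by
    intro x hx y hy hxy
    by_contra hne
    exact hf1 (hCS1 hx) (hCS1 hy) (hC hx hy hne) hxy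
  have inj2 : Set.InjOn f2 C := by
    intro x hx y hy hxy
    by_contra hne
    exact hf2 (hCS2 hx) (hCS2 hy) (hC hx hy hne) hxy
  set e : ↥(f2 '' C) ≃ ↥(f1 '' C) :=
    (Equiv.Set.imageOfInjOn f2 C inj2).symm.trans (Equiv.Set.imageOfInjOn f1 C inj1) with he_def
  set σ : Equiv.Perm (Fin k) := e.extendSubtype with hσ_def
  have hσ : ∀ x ∈ C, σ (f2 x) = f1 x := by
    intro x hx
    have hmem : f2 x ∈ f2 '' C := ⟨x, hx, rfl⟩
    rw [hσ_def, Equiv.extendSubtype_apply_of_mem e (f2 x) hmem]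
    have h2 : (Equiv.Set.imageOfInjOn f2 C inj2).symm ⟨f2 x, hmem⟩ = ⟨x, hx⟩ := by
      rw [Equiv.symm_apply_eq]
      rfl
    rw [he_def, Equiv.trans_apply, h2]
    rfl
  -- membership: outside S1 means in V2
  have hmemV2 : ∀ {v : V}, v ∉ S1 → v ∈ V2 := by
    intro v hv
    have hvC : v ∉ C := fun h => hv (Or.inr h)
    have : v ∈ V1 ∪ V2 := hunion ▸ hvC
    rcases this with h | h
    · exact absurd (Or.inl h) hv
    · exact h
  -- key mixed case
  have key : ∀ u v : V, G.Adj u v → u ∈ S1 → v ∉ S1 → f1 u ≠ σ (f2 v) := by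
    intro u v hadj hu hv
    have hv2' : v ∈ V2 := hmemV2 hv
    rcases hu with hu | hu
    · exact absurd hadj (hsep u hu v hv2')
    · rw [← hσ u hu]
      intro h
      exact hf2 (hCS2 hu) (Or.inl hv2') hadj (σ.injective h)
  -- the glued coloring
  have hcolG : G.Colorable k := by
    refine ⟨Coloring.mk (fun v => if h : v ∈ S1 then f1 v else σ (f2 v)) ?_⟩
    intro u v hadj
    by_cases hu : u ∈ S1 <;> by_cases hv : v ∈ S1
    · rw [dif_pos hu, dif_pos hv]; exact hf1 hu hv hadj
    · rw [dif_pos hu, dif_neg hv]; exact key u v hadj hu hv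
    · rw [dif_neg hu, dif_pos hv]; exact (key v u hadj.symm hv hu).symm
    · rw [dif_neg hu, dif_neg hv]
      intro h
      exact hf2 (Or.inl (hmemV2 hu)) (Or.inl (hmemV2 hv)) hadj (σ.injective h)
  -- hence χ(G) = ω(G)
  have hGeq : G.chromaticNumber = (k : ℕ∞) :=
    le_antisymm hcolG.chromaticNumber_le (cliqueNum_le_chromaticNumber' G)
  -- G is perfect, contradiction
  apply himp
  intro s
  by_cases hs : s = Set.univ
  · subst hs
    rw [chromaticNumber_eq_of_iso G.induceUnivIso, cliqueNum_eq_of_iso G.induceUnivIso]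
    exact hGeq
  · exact (hmin s hs).chromaticNumber_eq
end

section
/- A P5-free minimally non-perfectly divisible graph cannot contain a clique cutset. That is, if G is P5-free, G is not perfectly divisible, and every proper induced subgraph of G is perfectly divisible, then G has no clique cutset. -/
open SimpleGraph



/-- `G` is `P₅`-free: no induced subgraph of `G` is isomorphic to the path on 5 vertices. -/
def P5Free {W : Type*} (G : SimpleGraph W) : Prop :=
  ∀ s : Set W, ¬ Nonempty (pathGraph 5 ≃g G.induce s)


section Helpers
open Classical
variable {V : Type*} [Fintype V] {G : SimpleGraph V}

lemma edgeSet_nonempty_iff' {W : Type*} {H : SimpleGraph W} :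
    H.edgeSet.Nonempty ↔ ∃ x y, H.Adj x y := by
  constructor
  · rintro ⟨e, he⟩
    induction e with
    | h x y => exact ⟨x, y, he⟩
  · rintro ⟨x, y, h⟩
    exact ⟨s(x, y), h⟩

lemma iso_cliqueNum_le {α β : Type*} [Fintype α] [Fintype β] {G1 : SimpleGraph α}
    {G2 : SimpleGraph β} (f : G1 ↪g G2) : G1.cliqueNum ≤ G2.cliqueNum := by
  obtain ⟨s, hs⟩ := G1.exists_isNClique_cliqueNum
  have hc : G2.IsClique (s.map f.toEmbedding) := by
    rw [Finset.coe_map]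
    intro x hx y hy hxy
    obtain ⟨a, ha, rfl⟩ := hx
    obtain ⟨b, hb, rfl⟩ := hy
    have hab : a ≠ b := fun h => hxy (by rw [h])
    exact f.map_adj_iff.2 (hs.isClique ha hb hab)
  calc G1.cliqueNum = (s.map f.toEmbedding).card := by rw [Finset.card_map, hs.card_eq]
    _ ≤ G2.cliqueNum := IsClique.card_le_cliqueNum (tc := hc)

lemma iso_cliqueNum_eq {α β : Type*} [Fintype α] [Fintype β] {G1 : SimpleGraph α}
    {G2 : SimpleGraph β} (e : G1 ≃g G2) : G1.cliqueNum = G2.cliqueNum :=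
  le_antisymm (iso_cliqueNum_le e.toEmbedding) (iso_cliqueNum_le e.symm.toEmbedding)

lemma iso_chromaticNumber_eq {α β : Type*} {G1 : SimpleGraph α}
    {G2 : SimpleGraph β} (e : G1 ≃g G2) : G1.chromaticNumber = G2.chromaticNumber :=
  le_antisymm (chromaticNumber_mono_of_hom e.toEmbedding.toHom)
    (chromaticNumber_mono_of_hom e.symm.toEmbedding.toHom)

/-- Tower isomorphism: `(G[s])[u] ≅ G[val '' u]`. -/
noncomputable def towerIso (G : SimpleGraph V) (s : Set V) (u : Set ↥s) :
    (G.induce s).induce u ≃g G.induce (Subtype.val '' u) where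
  toEquiv := Equiv.Set.image Subtype.val u Subtype.val_injective
  map_rel_iff' := by
    intro a b
    simp [Equiv.Set.image, Equiv.Set.imageOfInjOn]


/-- Ambient lower bound on the clique number of an induced subgraph. -/
lemma card_le_cn {s : Set V} {Q : Finset V} (hQs : ↑Q ⊆ s) (hQ : G.IsClique ↑Q) :
    Q.card ≤ (G.induce s).cliqueNum := by
  classical
  set Q' : Finset ↥s := Q.subtype (· ∈ s) with hQ'
  have hcard : Q'.card = Q.card := by
    rw [hQ', Finset.card_subtype, Finset.filter_true_of_mem (fun x hx => hQs hx)]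
  have hc : (G.induce s).IsClique ↑Q' := by
    intro a ha b hb hab
    rw [Finset.mem_coe, hQ', Finset.mem_subtype] at ha hb
    have : (a : V) ≠ (b : V) := fun h => hab (Subtype.ext h)
    exact hQ ha hb this
  rw [← hcard]
  exact IsClique.card_le_cliqueNum (tc := hc)

/-- The clique number of an induced subgraph is attained by an ambient clique. -/
lemma exists_cn_clique (s : Set V) :
    ∃ Q : Finset V, ↑Q ⊆ s ∧ G.IsClique ↑Q ∧ Q.card = (G.induce s).cliqueNum := by
  classical
  obtain ⟨T, hT⟩ := (G.induce s).exists_isNClique_cliqueNum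
  refine ⟨T.map ⟨Subtype.val, Subtype.val_injective⟩, ?_, ?_, ?_⟩
  · intro x hx
    simp only [Finset.coe_map, Set.mem_image] at hx
    obtain ⟨a, _, rfl⟩ := hx
    exact a.2
  · rw [Finset.coe_map]
    rintro x ⟨a, ha, rfl⟩ y ⟨b, hb, rfl⟩ hxy
    have hab : a ≠ b := fun h => hxy (by rw [h])
    exact hT.isClique ha hb hab
  · rw [Finset.card_map, hT.card_eq]

lemma cn_mono {s t : Set V} (h : t ⊆ s) :
    (G.induce t).cliqueNum ≤ (G.induce s).cliqueNum := by
  obtain ⟨Q, hQt, hQ, hcard⟩ := exists_cn_clique (G := G) t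
  rw [← hcard]
  exact card_le_cn (hQt.trans h) hQ

lemma cn_le_chromaticNumber {s : Set V} :
    ((G.induce s).cliqueNum : ℕ∞) ≤ (G.induce s).chromaticNumber := by
  obtain ⟨T, hT⟩ := (G.induce s).exists_isNClique_cliqueNum
  have := hT.isClique.card_le_chromaticNumber
  rwa [hT.card_eq] at this

/-- cliqueNum of the tower equals the ambient one. -/
lemma cn_tower (s : Set V) (u : Set ↥s) :
    ((G.induce s).induce u).cliqueNum = (G.induce (Subtype.val '' u)).cliqueNum :=
  iso_cliqueNum_eq (towerIso G s u)

omit [Fintype V] in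
lemma chrom_tower (s : Set V) (u : Set ↥s) :
    ((G.induce s).induce u).chromaticNumber = (G.induce (Subtype.val '' u)).chromaticNumber :=
  iso_chromaticNumber_eq (towerIso G s u)

/-- Ambient version of perfection of `G[A]`. -/
def PerfOn (G : SimpleGraph V) (A : Set V) : Prop :=
  ∀ t : Set V, t ⊆ A → (G.induce t).chromaticNumber = ((G.induce t).cliqueNum : ℕ∞)

omit [Fintype V] in
lemma val_image_preimage {A t : Set V} (hts : t ⊆ A) :
    Subtype.val '' ((Subtype.val : ↥A → V) ⁻¹' t) = t := by
  rw [Subtype.image_preimage_coe]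
  exact Set.inter_eq_self_of_subset_right hts

/-- An isomorphism restricted to an induced subgraph. -/
noncomputable def isoInduce {W W' : Type*} {H : SimpleGraph W} {H' : SimpleGraph W'}
    (e : H ≃g H') (w : Set W) : H.induce w ≃g H'.induce (e '' w) where
  toEquiv := e.toEquiv.image w
  map_rel_iff' := by
    intro a b
    simp only [Equiv.image, Equiv.subtypeEquiv_apply, comap_adj, Function.Embedding.coe_subtype]
    exact e.map_adj_iff

omit [Fintype V] in
lemma isPerfect_of_iso {W W' : Type*} {H : SimpleGraph W} {H' : SimpleGraph W'}
    (e : H ≃g H') [Fintype W] [Fintype W'] (h : IsPerfect H') : IsPerfect H := by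
  intro w
  rw [iso_chromaticNumber_eq (isoInduce e w), iso_cliqueNum_eq (isoInduce e w)]
  exact h _

lemma isPerfect_iff_perfOn {A : Set V} : IsPerfect (G.induce A) ↔ PerfOn G A := by
  constructor
  · intro h t hts
    have h' := h ((Subtype.val : ↥A → V) ⁻¹' t)
    rwa [chrom_tower, cn_tower, val_image_preimage hts] at h'
  · intro h u
    rw [chrom_tower, cn_tower]
    exact h _ (by rintro x ⟨a, _, rfl⟩; exact a.2)

omit [Fintype V] in
lemma perfOn_mono {A B : Set V} (h : B ⊆ A) (hA : PerfOn G A) : PerfOn G B :=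
  fun t ht => hA t (ht.trans h)

/-- Transfer of perfect divisibility of an induced subgraph to ambient good partitions. -/
lemma good_of_PD {s t : Set V} (h : PerfectlyDivisible (G.induce s)) (hts : t ⊆ s)
    (hedge : ∃ x ∈ t, ∃ y ∈ t, G.Adj x y) :
    ∃ A B : Set V, A ∪ B = t ∧ Disjoint A B ∧ PerfOn G A ∧
      (G.induce B).cliqueNum < (G.induce t).cliqueNum := by
  classical
  set u : Set ↥s := (Subtype.val : ↥s → V) ⁻¹' t with hu
  have himg : Subtype.val '' u = t := val_image_preimage hts
  have hedge' : ((G.induce s).induce u).edgeSet.Nonempty := by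
    rw [edgeSet_nonempty_iff']
    obtain ⟨x, hx, y, hy, hxy⟩ := hedge
    exact ⟨⟨⟨x, hts hx⟩, hx⟩, ⟨⟨y, hts hy⟩, hy⟩, hxy⟩
  obtain ⟨A', B', hunion, hdisj, hperf, hlt⟩ := h u hedge'
  refine ⟨Subtype.val '' A', Subtype.val '' B', ?_, ?_, ?_, ?_⟩
  · rw [← Set.image_union, hunion, himg]
  · exact (Set.disjoint_image_iff Subtype.val_injective).2 hdisj
  · rw [← isPerfect_iff_perfOn]
    exact isPerfect_of_iso (towerIso G s A').symm hperf
  · have h1 := cn_tower (G := G) s B'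
    have h2 := cn_tower (G := G) s u
    rw [h1, h2, himg] at hlt
    exact hlt

/-- In an MNPD graph nothing but the full vertex set can fail to have a good partition. -/
lemma mnpd_univ_fails (hmnpd : MNPD G) (A B : Set V) : ¬ GoodPartition G Set.univ A B := by
  intro hgood
  apply hmnpd.1
  intro s hs
  by_cases h : s = Set.univ
  · subst h; exact ⟨A, B, hgood⟩
  · obtain ⟨x, y, hxy⟩ := edgeSet_nonempty_iff'.1 hs
    obtain ⟨A', B', h1, h2, h3, h4⟩ := good_of_PD (hmnpd.2 s h) (subset_refl s)
      ⟨x, x.2, y, y.2, hxy⟩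
    exact ⟨A', B', h1, h2, isPerfect_iff_perfOn.2 h3, h4⟩

lemma perfOn_of_no_edge {A : Set V} (h : ∀ x ∈ A, ∀ y ∈ A, ¬ G.Adj x y) : PerfOn G A := by
  intro t hts
  rcases t.eq_empty_or_nonempty with rfl | ⟨x, hx⟩
  · have hempty : IsEmpty ↥(∅ : Set V) := Set.instIsEmptyElemEmptyCollection V
    rw [chromaticNumber_eq_zero_of_isEmpty]
    obtain ⟨Q, hQt, _, hcard⟩ := exists_cn_clique (G := G) (∅ : Set V)
    have : Q = ∅ := Finset.eq_empty_of_forall_notMem fun a ha => (hQt ha)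
    rw [← hcard, this]
    simp
  · have hne : Nonempty ↥t := ⟨⟨x, hx⟩⟩
    have hcol : (G.induce t).Colorable 1 :=
      ⟨Coloring.mk (fun _ => 0) (by
        intro a b hab
        exact absurd hab (h a.1 (hts a.2) b.1 (hts b.2)))⟩
    have hchrom : (G.induce t).chromaticNumber = 1 :=
      le_antisymm (by exact_mod_cast hcol.chromaticNumber_le)
        (Order.one_le_iff_pos.2 (chromaticNumber_pos hcol))
    have hcn : (G.induce t).cliqueNum = 1 := by
      apply le_antisymm
      · obtain ⟨Q, hQt, hQ, hcard⟩ := exists_cn_clique (G := G) t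
        rw [← hcard]
        by_contra hlt
        push_neg at hlt
        obtain ⟨a, ha, b, hb, hab⟩ := Finset.one_lt_card.1 hlt
        exact h a (hts (hQt ha)) b (hts (hQt hb)) (hQ ha hb hab)
      · have := card_le_cn (G := G) (s := t) (Q := {x}) (by simpa using hx)
          (by simp [SimpleGraph.isClique_iff, Set.pairwise_singleton])
        simpa using this
    rw [hchrom, hcn]
    simp

omit [Fintype V] in
lemma isClique_union {s t : Set V} (hs : G.IsClique s) (ht : G.IsClique t)
    (hst : ∀ x ∈ s, ∀ y ∈ t, x ≠ y → G.Adj x y) : G.IsClique (s ∪ t) := by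
  intro a ha b hb hab
  rcases ha with ha | ha <;> rcases hb with hb | hb
  · exact hs ha hb hab
  · exact hst a ha b hb hab
  · exact (hst b hb a ha (Ne.symm hab)).symm
  · exact ht ha hb hab

omit [Fintype V] in
/-- From an explicit induced path on 5 vertices, contradict `P5Free`. -/
lemma p5_builder (hP5 : P5Free G) (a b c d e : V)
    (hab : G.Adj a b) (hbc : G.Adj b c) (hcd : G.Adj c d) (hde : G.Adj d e)
    (hac : ¬ G.Adj a c) (had : ¬ G.Adj a d) (hae : ¬ G.Adj a e)
    (hbd : ¬ G.Adj b d) (hbe : ¬ G.Adj b e) (hce : ¬ G.Adj c e)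
    (nac : a ≠ c) (nad : a ≠ d) (nae : a ≠ e) (nbd : b ≠ d) (nbe : b ≠ e)
    (nce : c ≠ e) : False := by
  have nab : a ≠ b := hab.ne
  have nbc : b ≠ c := hbc.ne
  have ncd : c ≠ d := hcd.ne
  have nde : d ≠ e := hde.ne
  set t : Set V := {a, b, c, d, e} with ht
  apply hP5 t
  have hmem : ∀ i : Fin 5, (![a, b, c, d, e] i) ∈ t := by
    intro i; fin_cases i <;> simp [ht]
  let g : Fin 5 → ↥t := fun i => ⟨![a, b, c, d, e] i, hmem i⟩
  have hinj : Function.Injective g := by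
    intro i j hij
    rw [Subtype.mk.injEq] at hij
    fin_cases i <;> fin_cases j <;>
      simp only [Matrix.cons_val_zero, Matrix.cons_val_one, Matrix.cons_val_two, Matrix.cons_val_three, Matrix.cons_val_four, Matrix.head_cons, Matrix.tail_cons, Matrix.head_fin_const] at hij <;>
      first
      | rfl
      | exact absurd hij nab
      | exact absurd hij.symm nab
      | exact absurd hij nbc
      | exact absurd hij.symm nbc
      | exact absurd hij ncd
      | exact absurd hij.symm ncd
      | exact absurd hij nde
      | exact absurd hij.symm nde
      | exact absurd hij nac
      | exact absurd hij.symm nac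
      | exact absurd hij nad
      | exact absurd hij.symm nad
      | exact absurd hij nae
      | exact absurd hij.symm nae
      | exact absurd hij nbd
      | exact absurd hij.symm nbd
      | exact absurd hij nbe
      | exact absurd hij.symm nbe
      | exact absurd hij nce
      | exact absurd hij.symm nce
  have hsurj : Function.Surjective g := by
    rintro ⟨v, hv⟩
    rw [ht] at hv
    simp only [Set.mem_insert_iff, Set.mem_singleton_iff] at hv
    rcases hv with rfl | rfl | rfl | rfl | rfl
    · exact ⟨0, rfl⟩
    · exact ⟨1, rfl⟩
    · exact ⟨2, rfl⟩
    · exact ⟨3, rfl⟩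
    · exact ⟨4, rfl⟩
  refine ⟨{ toEquiv := Equiv.ofBijective g ⟨hinj, hsurj⟩, map_rel_iff' := ?_ }⟩
  intro i j
  show (G.induce t).Adj (g i) (g j) ↔ (pathGraph 5).Adj i j
  have hadj : ∀ i j, (G.induce t).Adj (g i) (g j) ↔ G.Adj (![a, b, c, d, e] i)
      (![a, b, c, d, e] j) := fun i j => Iff.rfl
  rw [hadj, pathGraph_adj]
  fin_cases i <;> fin_cases j <;>
    simp only [Matrix.cons_val_zero, Matrix.cons_val_one, Matrix.cons_val_two, Matrix.cons_val_three, Matrix.cons_val_four, Matrix.head_cons, Matrix.tail_cons, Matrix.head_fin_const] <;>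
    first
    | exact iff_of_false (G.irrefl) (by decide)
    | exact iff_of_true hab (by decide)
    | exact iff_of_true hab.symm (by decide)
    | exact iff_of_true hbc (by decide)
    | exact iff_of_true hbc.symm (by decide)
    | exact iff_of_true hcd (by decide)
    | exact iff_of_true hcd.symm (by decide)
    | exact iff_of_true hde (by decide)
    | exact iff_of_true hde.symm (by decide)
    | exact iff_of_false hac (by decide)
    | exact iff_of_false (fun hx => hac hx.symm) (by decide)
    | exact iff_of_false had (by decide)
    | exact iff_of_false (fun hx => had hx.symm) (by decide)
    | exact iff_of_false hae (by decide)
    | exact iff_of_false (fun hx => hae hx.symm) (by decide)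
    | exact iff_of_false hbd (by decide)
    | exact iff_of_false (fun hx => hbd hx.symm) (by decide)
    | exact iff_of_false hbe (by decide)
    | exact iff_of_false (fun hx => hbe hx.symm) (by decide)
    | exact iff_of_false hce (by decide)
    | exact iff_of_false (fun hx => hce hx.symm) (by decide)

/-- Color permutation lemma: an injection on `[0,n)` sending a given `k`-set `S` into the top
block `[n-k, n)` and its complement into `[0, n-k)`. -/
lemma perm_lemma (n k : ℕ) (S : Finset ℕ) (hS : ∀ j ∈ S, j < n) (hcard : S.card = k) :
    ∃ σ : ℕ → ℕ, (∀ j1, j1 < n → ∀ j2, j2 < n → σ j1 = σ j2 → j1 = j2) ∧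
      (∀ j ∈ S, n - k ≤ σ j ∧ σ j < n) ∧ (∀ j, j < n → j ∉ S → σ j < n - k) := by
  classical
  have hk : k ≤ n := by
    rw [← hcard]
    calc S.card ≤ (Finset.range n).card := Finset.card_le_card (fun j hj =>
      Finset.mem_range.2 (hS j hj))
    _ = n := Finset.card_range n
  set T : Finset ℕ := Finset.range n \ S with hT
  have hTcard : T.card = n - k := by
    rw [hT, Finset.card_sdiff_of_subset (fun j hj => Finset.mem_range.2 (hS j hj)),
      Finset.card_range, hcard]
  have e1 : ↥S ≃ ↥(Finset.Ico (n - k) n) :=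
    Finset.equivOfCardEq (by rw [hcard, Nat.card_Ico]; omega)
  have e2 : ↥T ≃ ↥(Finset.range (n - k)) :=
    Finset.equivOfCardEq (by rw [hTcard, Finset.card_range])
  refine ⟨fun j => if h : j ∈ S then (e1 ⟨j, h⟩ : ℕ) else if h2 : j ∈ T then
    (e2 ⟨j, h2⟩ : ℕ) else j, ?_, ?_, ?_⟩
  · intro j1 hj1 j2 hj2 heq
    have hmem1 : j1 ∈ S ∨ j1 ∈ T := by
      by_cases h : j1 ∈ S
      · exact Or.inl h
      · exact Or.inr (Finset.mem_sdiff.2 ⟨Finset.mem_range.2 hj1, h⟩)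
    have hmem2 : j2 ∈ S ∨ j2 ∈ T := by
      by_cases h : j2 ∈ S
      · exact Or.inl h
      · exact Or.inr (Finset.mem_sdiff.2 ⟨Finset.mem_range.2 hj2, h⟩)
    simp only at heq
    rcases hmem1 with h1 | h1 <;> rcases hmem2 with h2 | h2
    · rw [dif_pos h1, dif_pos h2] at heq
      have := e1.injective (Subtype.ext heq)
      exact congrArg Subtype.val this
    · have hn1 : j2 ∉ S := (Finset.mem_sdiff.1 h2).2
      rw [dif_pos h1, dif_neg hn1, dif_pos h2] at heq
      have hv1 := (e1 ⟨j1, h1⟩).2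
      have hv2 := (e2 ⟨j2, h2⟩).2
      rw [Finset.mem_Ico] at hv1
      rw [Finset.mem_range] at hv2
      omega
    · have hn1 : j1 ∉ S := (Finset.mem_sdiff.1 h1).2
      rw [dif_neg hn1, dif_pos h1, dif_pos h2] at heq
      have hv1 := (e2 ⟨j1, h1⟩).2
      have hv2 := (e1 ⟨j2, h2⟩).2
      rw [Finset.mem_Ico] at hv2
      rw [Finset.mem_range] at hv1
      omega
    · have hn1 : j1 ∉ S := (Finset.mem_sdiff.1 h1).2
      have hn2 : j2 ∉ S := (Finset.mem_sdiff.1 h2).2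
      rw [dif_neg hn1, dif_pos h1, dif_neg hn2, dif_pos h2] at heq
      have := e2.injective (Subtype.ext heq)
      exact congrArg Subtype.val this
  · intro j hj
    simp only
    rw [dif_pos hj]
    have := (e1 ⟨j, hj⟩).2
    rw [Finset.mem_Ico] at this
    exact this
  · intro j hj hjS
    have hjT : j ∈ T := Finset.mem_sdiff.2 ⟨Finset.mem_range.2 hj, hjS⟩
    simp only
    rw [dif_neg hjS, dif_pos hjT]
    have := (e2 ⟨j, hjT⟩).2
    rwa [Finset.mem_range] at this

lemma top_aux (A1 A2 : Set V) (K1 K2 : Finset V)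
    (h1 : PerfOn G A1) (h2 : PerfOn G A2) (hdisj : Disjoint A1 A2)
    (hK1 : ↑K1 ⊆ A1) (hK2 : ↑K2 ⊆ A2)
    (hcK1 : G.IsClique ↑K1) (hcK2 : G.IsClique ↑K2)
    (hcross : ∀ x ∈ A1, ∀ y ∈ A2, G.Adj x y → x ∈ K1 ∨ y ∈ K2)
    (hle : (G.induce A1).cliqueNum + K2.card ≤ (G.induce A2).cliqueNum + K1.card) :
    (G.induce (A1 ∪ A2)).Colorable ((G.induce A2).cliqueNum + K1.card) := by
  classical
  set n1 := (G.induce A1).cliqueNum with hn1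
  set n2 := (G.induce A2).cliqueNum with hn2
  set k1 := K1.card with hk1
  set k2 := K2.card with hk2
  have hk1n1 : k1 ≤ n1 := card_le_cn hK1 hcK1
  have hk2n2 : k2 ≤ n2 := card_le_cn hK2 hcK2
  have hcol1 : (G.induce A1).Colorable n1 :=
    chromaticNumber_le_iff_colorable.1 (le_of_eq (h1 A1 (subset_refl _)))
  have hcol2 : (G.induce A2).Colorable n2 :=
    chromaticNumber_le_iff_colorable.1 (le_of_eq (h2 A2 (subset_refl _)))
  obtain ⟨C1, hC1⟩ := (colorable_iff_exists_bdd_nat_coloring n1).1 hcol1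
  obtain ⟨C2, hC2⟩ := (colorable_iff_exists_bdd_nat_coloring n2).1 hcol2
  set S1 : Finset ℕ := K1.attach.image (fun x => C1 ⟨x.1, hK1 x.2⟩) with hS1
  set S2 : Finset ℕ := K2.attach.image (fun x => C2 ⟨x.1, hK2 x.2⟩) with hS2
  have hS1lt : ∀ j ∈ S1, j < n1 := by
    intro j hj
    rw [hS1, Finset.mem_image] at hj
    obtain ⟨x, _, rfl⟩ := hj
    exact hC1 _
  have hS2lt : ∀ j ∈ S2, j < n2 := by
    intro j hj
    rw [hS2, Finset.mem_image] at hj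
    obtain ⟨x, _, rfl⟩ := hj
    exact hC2 _
  have hS1card : S1.card = k1 := by
    rw [hS1, Finset.card_image_of_injOn, Finset.card_attach]
    intro x _ y _ hxy
    by_contra hne
    have hvne : x.1 ≠ y.1 := fun h => hne (Subtype.ext h)
    exact C1.valid (show (G.induce A1).Adj ⟨x.1, hK1 x.2⟩ ⟨y.1, hK1 y.2⟩ from
      hcK1 x.2 y.2 hvne) hxy
  have hS2card : S2.card = k2 := by
    rw [hS2, Finset.card_image_of_injOn, Finset.card_attach]
    intro x _ y _ hxy
    by_contra hne
    have hvne : x.1 ≠ y.1 := fun h => hne (Subtype.ext h)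
    exact C2.valid (show (G.induce A2).Adj ⟨x.1, hK2 x.2⟩ ⟨y.1, hK2 y.2⟩ from
      hcK2 x.2 y.2 hvne) hxy
  obtain ⟨σ1, hσ1inj, hσ1S, hσ1T⟩ := perm_lemma n1 k1 S1 hS1lt hS1card
  obtain ⟨σ2, hσ2inj, hσ2S, hσ2T⟩ := perm_lemma n2 k2 S2 hS2lt hS2card
  have hσ1lt : ∀ j, j < n1 → σ1 j < n1 := by
    intro j hj
    by_cases h : j ∈ S1
    · exact (hσ1S j h).2
    · exact lt_of_lt_of_le (hσ1T j hj h) (Nat.sub_le _ _)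
  have hσ2lt : ∀ j, j < n2 → σ2 j < n2 := by
    intro j hj
    by_cases h : j ∈ S2
    · exact (hσ2S j h).2
    · exact lt_of_lt_of_le (hσ2T j hj h) (Nat.sub_le _ _)
  have hblock : n1 - k1 ≤ n2 - k2 := by omega
  set τ : ℕ → ℕ := fun j => if j < n1 - k1 then j else j - (n1 - k1) + n2 with hτ
  have hmem2 : ∀ v : ↥(A1 ∪ A2), v.1 ∉ A1 → v.1 ∈ A2 := fun v hv => v.2.resolve_left hv
  set color : ↥(A1 ∪ A2) → ℕ := fun v =>
    if h : v.1 ∈ A1 then τ (σ1 (C1 ⟨v.1, h⟩)) else σ2 (C2 ⟨v.1, hmem2 v h⟩) with hcolor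
  -- the two value-range facts
  have hval1 : ∀ (x : V) (hx : x ∈ A1),
      (τ (σ1 (C1 ⟨x, hx⟩)) < n1 - k1 ∨ (n2 ≤ τ (σ1 (C1 ⟨x, hx⟩)) ∧
        τ (σ1 (C1 ⟨x, hx⟩)) < n2 + k1)) := by
    intro x hx
    have hlt : σ1 (C1 ⟨x, hx⟩) < n1 := hσ1lt _ (hC1 _)
    rw [hτ]
    simp only
    split_ifs with h
    · exact Or.inl h
    · exact Or.inr ⟨by omega, by omega⟩
  have hvalK1 : ∀ (x : V) (hx : x ∈ A1), x ∈ K1 → n2 ≤ τ (σ1 (C1 ⟨x, hx⟩)) := by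
    intro x hx hxK
    have hmemS : C1 ⟨x, hx⟩ ∈ S1 := by
      rw [hS1, Finset.mem_image]
      exact ⟨⟨x, hxK⟩, Finset.mem_attach _ _, rfl⟩
    have hrange := hσ1S _ hmemS
    rw [hτ]
    simp only
    rw [if_neg (by omega)]
    omega
  have hvalK2 : ∀ (y : V) (hy : y ∈ A2), y ∈ K2 →
      n2 - k2 ≤ σ2 (C2 ⟨y, hy⟩) ∧ σ2 (C2 ⟨y, hy⟩) < n2 := by
    intro y hy hyK
    apply hσ2S
    rw [hS2, Finset.mem_image]
    exact ⟨⟨y, hyK⟩, Finset.mem_attach _ _, rfl⟩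
  have hτinj : ∀ a b, a < n1 → b < n1 → τ a = τ b → a = b := by
    intro a b ha hb heq
    rw [hτ] at heq
    simp only at heq
    split_ifs at heq <;> omega
  -- validity
  have hvalid : ∀ {v w : ↥(A1 ∪ A2)}, (G.induce (A1 ∪ A2)).Adj v w →
      color v ≠ color w := by
    intro v w hadj
    have hadj' : G.Adj v.1 w.1 := hadj
    by_cases hv : v.1 ∈ A1 <;> by_cases hw : w.1 ∈ A1
    · rw [hcolor]
      simp only
      rw [dif_pos hv, dif_pos hw]
      intro heq
      have h1' := hτinj _ _ (hσ1lt _ (hC1 _)) (hσ1lt _ (hC1 _)) heq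
      have h2' := hσ1inj _ (hC1 _) _ (hC1 _) h1'
      exact C1.valid (show (G.induce A1).Adj ⟨v.1, hv⟩ ⟨w.1, hw⟩ from hadj') h2'
    · -- v ∈ A1, w ∈ A2
      have hw2 : w.1 ∈ A2 := hmem2 w hw
      rw [hcolor]
      simp only
      rw [dif_pos hv, dif_neg hw]
      rcases hcross v.1 hv w.1 hw2 hadj' with hK | hK
      · have := hvalK1 v.1 hv hK
        have := hσ2lt (C2 ⟨w.1, hmem2 w hw⟩) (hC2 _)
        omega
      · have h3 := hvalK2 w.1 (hmem2 w hw) hK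
        have h4 := hval1 v.1 hv
        omega
    · -- v ∈ A2, w ∈ A1
      have hv2 : v.1 ∈ A2 := hmem2 v hv
      rw [hcolor]
      simp only
      rw [dif_neg hv, dif_pos hw]
      rcases hcross w.1 hw v.1 hv2 hadj'.symm with hK | hK
      · have := hvalK1 w.1 hw hK
        have := hσ2lt (C2 ⟨v.1, hmem2 v hv⟩) (hC2 _)
        omega
      · have h3 := hvalK2 v.1 (hmem2 v hv) hK
        have h4 := hval1 w.1 hw
        omega
    · -- both in A2
      have hv2 : v.1 ∈ A2 := hmem2 v hv
      have hw2 : w.1 ∈ A2 := hmem2 w hw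
      rw [hcolor]
      simp only
      rw [dif_neg hv, dif_neg hw]
      intro heq
      have h2' := hσ2inj _ (hC2 _) _ (hC2 _) heq
      exact C2.valid (show (G.induce A2).Adj ⟨v.1, hv2⟩ ⟨w.1, hw2⟩ from hadj') h2'
  refine (colorable_iff_exists_bdd_nat_coloring _).2 ⟨Coloring.mk color hvalid, ?_⟩
  intro v
  show color v < n2 + k1
  rw [hcolor]
  simp only
  split_ifs with h
  · rcases hval1 v.1 h with hlow | hhigh
    · omega
    · exact hhigh.2
  · have := hσ2lt (C2 ⟨v.1, hmem2 v h⟩) (hC2 _)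
    omega

lemma top_chrom (A1 A2 : Set V) (K1 K2 : Finset V)
    (h1 : PerfOn G A1) (h2 : PerfOn G A2) (hdisj : Disjoint A1 A2)
    (hK1 : ↑K1 ⊆ A1) (hK2 : ↑K2 ⊆ A2)
    (hcK1 : G.IsClique ↑K1) (hcK2 : G.IsClique ↑K2)
    (hK1A2 : ∀ x ∈ K1, ∀ y ∈ A2, G.Adj x y)
    (hK2A1 : ∀ x ∈ K2, ∀ y ∈ A1, G.Adj x y)
    (hcross : ∀ x ∈ A1, ∀ y ∈ A2, G.Adj x y → x ∈ K1 ∨ y ∈ K2) :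
    (G.induce (A1 ∪ A2)).chromaticNumber = ((G.induce (A1 ∪ A2)).cliqueNum : ℕ∞) := by
  classical
  set n1 := (G.induce A1).cliqueNum with hn1
  set n2 := (G.induce A2).cliqueNum with hn2
  have hwit : ∀ m : ℕ, (G.induce (A1 ∪ A2)).Colorable m →
      m ≤ (G.induce (A1 ∪ A2)).cliqueNum →
      (G.induce (A1 ∪ A2)).chromaticNumber = ((G.induce (A1 ∪ A2)).cliqueNum : ℕ∞) := by
    intro m hcol hm
    refine le_antisymm ?_ cn_le_chromaticNumber
    calc (G.induce (A1 ∪ A2)).chromaticNumber ≤ (m : ℕ∞) := hcol.chromaticNumber_le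
      _ ≤ _ := by exact_mod_cast hm
  by_cases hle : n1 + K2.card ≤ n2 + K1.card
  · apply hwit (n2 + K1.card)
    · exact top_aux A1 A2 K1 K2 h1 h2 hdisj hK1 hK2 hcK1 hcK2 hcross hle
    · obtain ⟨Q2, hQ2sub, hQ2c, hQ2card⟩ := exists_cn_clique (G := G) A2
      have hdisjQ : Disjoint Q2 K1 := by
        rw [Finset.disjoint_left]
        intro a haQ haK
        exact Set.disjoint_right.1 hdisj (hQ2sub haQ) (hK1 haK)
      have hclique : G.IsClique ↑(Q2 ∪ K1) := by
        rw [Finset.coe_union]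
        exact isClique_union hQ2c hcK1
          (fun x hx y hy hne => (hK1A2 y hy x (hQ2sub hx)).symm)
      have hsub : ↑(Q2 ∪ K1) ⊆ A1 ∪ A2 := by
        rw [Finset.coe_union]
        exact Set.union_subset (hQ2sub.trans Set.subset_union_right)
          (hK1.trans Set.subset_union_left)
      have := card_le_cn hsub hclique
      rwa [Finset.card_union_of_disjoint hdisjQ, hQ2card] at this
  · push_neg at hle
    apply hwit (n1 + K2.card)
    · have hcross' : ∀ x ∈ A2, ∀ y ∈ A1, G.Adj x y → x ∈ K2 ∨ y ∈ K1 :=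
        fun x hx y hy h => Or.symm (hcross y hy x hx h.symm)
      have := top_aux A2 A1 K2 K1 h2 h1 hdisj.symm hK2 hK1 hcK2 hcK1 hcross' hle.le
      rwa [Set.union_comm] at this
    · obtain ⟨Q1, hQ1sub, hQ1c, hQ1card⟩ := exists_cn_clique (G := G) A1
      have hdisjQ : Disjoint Q1 K2 := by
        rw [Finset.disjoint_left]
        intro a haQ haK
        exact Set.disjoint_left.1 hdisj (hQ1sub haQ) (hK2 haK)
      have hclique : G.IsClique ↑(Q1 ∪ K2) := by
        rw [Finset.coe_union]
        exact isClique_union hQ1c hcK2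
          (fun x hx y hy hne => (hK2A1 y hy x (hQ1sub hx)).symm)
      have hsub : ↑(Q1 ∪ K2) ⊆ A1 ∪ A2 := by
        rw [Finset.coe_union]
        exact Set.union_subset (hQ1sub.trans Set.subset_union_left)
          (hK2.trans Set.subset_union_right)
      have := card_le_cn hsub hclique
      rwa [Finset.card_union_of_disjoint hdisjQ, hQ1card] at this

/-- The key perfection lemma: the union of two perfect sets joined only through
cliques that are complete to the other side is perfect. -/
lemma perfOn_union (A1 A2 : Set V) (K1 K2 : Finset V)
    (h1 : PerfOn G A1) (h2 : PerfOn G A2) (hdisj : Disjoint A1 A2)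
    (hK1 : ↑K1 ⊆ A1) (hK2 : ↑K2 ⊆ A2)
    (hcK1 : G.IsClique ↑K1) (hcK2 : G.IsClique ↑K2)
    (hK1A2 : ∀ x ∈ K1, ∀ y ∈ A2, G.Adj x y)
    (hK2A1 : ∀ x ∈ K2, ∀ y ∈ A1, G.Adj x y)
    (hcross : ∀ x ∈ A1, ∀ y ∈ A2, G.Adj x y → x ∈ K1 ∨ y ∈ K2) :
    PerfOn G (A1 ∪ A2) := by
  classical
  intro t ht
  have hteq : (A1 ∩ t) ∪ (A2 ∩ t) = t := by
    rw [← Set.union_inter_distrib_right]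
    exact Set.inter_eq_self_of_subset_right ht
  rw [← hteq]
  apply top_chrom (A1 ∩ t) (A2 ∩ t) (K1.filter (· ∈ t)) (K2.filter (· ∈ t))
    (perfOn_mono Set.inter_subset_left h1) (perfOn_mono Set.inter_subset_left h2)
    ((hdisj.mono_left Set.inter_subset_left).mono_right Set.inter_subset_left)
  · intro x hx
    rw [Finset.coe_filter] at hx
    exact ⟨hK1 hx.1, hx.2⟩
  · intro x hx
    rw [Finset.coe_filter] at hx
    exact ⟨hK2 hx.1, hx.2⟩
  · exact hcK1.subset (by rw [Finset.coe_filter]; exact fun x hx => hx.1)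
  · exact hcK2.subset (by rw [Finset.coe_filter]; exact fun x hx => hx.1)
  · intro x hx y hy
    rw [Finset.mem_filter] at hx
    exact hK1A2 x hx.1 y hy.1
  · intro x hx y hy
    rw [Finset.mem_filter] at hx
    exact hK2A1 x hx.1 y hy.1
  · intro x hx y hy hadj
    rcases hcross x hx.1 y hy.1 hadj with h | h
    · exact Or.inl (Finset.mem_filter.2 ⟨h, hx.2⟩)
    · exact Or.inr (Finset.mem_filter.2 ⟨h, hy.2⟩)

/-- From MNPD get, for each proper nonempty subset `S`, a partition into a perfect part and
a part all of whose cliques can be beaten inside `S`. -/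
lemma side_partition (hmnpd : MNPD G) {S : Set V} (hS : S ≠ Set.univ) (hSne : S.Nonempty) :
    ∃ A B : Set V, A ∪ B = S ∧ Disjoint A B ∧ PerfOn G A ∧
      ∀ Q : Finset V, ↑Q ⊆ B → G.IsClique ↑Q →
        ∃ Q' : Finset V, ↑Q' ⊆ S ∧ G.IsClique ↑Q' ∧ Q.card < Q'.card := by
  classical
  by_cases hedge : ∃ x ∈ S, ∃ y ∈ S, G.Adj x y
  · obtain ⟨A, B, hunion, hdisj, hperf, hlt⟩ :=
      good_of_PD (hmnpd.2 S hS) (subset_refl S) hedge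
    refine ⟨A, B, hunion, hdisj, hperf, ?_⟩
    intro Q hQB hQc
    obtain ⟨Q', hQ'S, hQ'c, hQ'card⟩ := exists_cn_clique (G := G) S
    refine ⟨Q', hQ'S, hQ'c, ?_⟩
    calc Q.card ≤ (G.induce B).cliqueNum := card_le_cn hQB hQc
      _ < (G.induce S).cliqueNum := hlt
      _ = Q'.card := hQ'card.symm
  · push_neg at hedge
    refine ⟨S, ∅, Set.union_empty S, Set.disjoint_empty S,
      perfOn_of_no_edge hedge, ?_⟩
    intro Q hQB _
    obtain ⟨x, hx⟩ := hSne
    refine ⟨{x}, by simpa using hx, by simp [SimpleGraph.isClique_iff, Set.pairwise_singleton], ?_⟩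
    have : Q = ∅ := Finset.eq_empty_of_forall_notMem fun a ha => (hQB ha)
    simp [this]

/-- The final construction: a split of the clique cutset into a part complete to `V1`
and a part complete to `V2` yields a good partition of the whole graph, contradiction. -/
lemma construct_contradiction (hmnpd : MNPD G)
    (V1 V2 Ca Cb : Set V)
    (hV1ne : V1.Nonempty) (hV2ne : V2.Nonempty)
    (hd12 : Disjoint V1 V2) (hd1a : Disjoint V1 Ca) (hd1b : Disjoint V1 Cb)
    (hd2a : Disjoint V2 Ca) (hd2b : Disjoint V2 Cb) (hdab : Disjoint Ca Cb)
    (hcover : V1 ∪ V2 ∪ Ca ∪ Cb = Set.univ)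
    (hC : G.IsClique (Ca ∪ Cb))
    (hCaV1 : ∀ c ∈ Ca, ∀ x ∈ V1, G.Adj c x)
    (hCbV2 : ∀ c ∈ Cb, ∀ x ∈ V2, G.Adj c x)
    (hnoedge : ∀ x ∈ V1, ∀ y ∈ V2, ¬ G.Adj x y) : False := by
  classical
  set S1 := V1 ∪ Cb with hS1
  set S2 := V2 ∪ Ca with hS2
  have hS1S2 : Disjoint S1 S2 := by
    rw [hS1, hS2, Set.disjoint_union_left]
    constructor
    · rw [Set.disjoint_union_right]; exact ⟨hd12, hd1a⟩
    · rw [Set.disjoint_union_right]; exact ⟨hd2b.symm, hdab.symm⟩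
  obtain ⟨v2, hv2⟩ := hV2ne
  obtain ⟨v1, hv1⟩ := hV1ne
  have hS1ne : S1 ≠ Set.univ := fun h => Set.disjoint_left.1 hS1S2
    (h ▸ Set.mem_univ v2) (Or.inl hv2)
  have hS2ne : S2 ≠ Set.univ := fun h => Set.disjoint_right.1 hS1S2
    (h ▸ Set.mem_univ v1) (Or.inl hv1)
  obtain ⟨A1, B1, hu1, hdj1, hp1, hep1⟩ := side_partition hmnpd hS1ne ⟨v1, Or.inl hv1⟩
  obtain ⟨A2, B2, hu2, hdj2, hp2, hep2⟩ := side_partition hmnpd hS2ne ⟨v2, Or.inl hv2⟩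
  have hA1S1 : A1 ⊆ S1 := hu1 ▸ Set.subset_union_left
  have hB1S1 : B1 ⊆ S1 := hu1 ▸ Set.subset_union_right
  have hA2S2 : A2 ⊆ S2 := hu2 ▸ Set.subset_union_left
  have hB2S2 : B2 ⊆ S2 := hu2 ▸ Set.subset_union_right
  -- the two cross cliques
  set K1 : Finset V := (A1 ∩ Cb).toFinite.toFinset with hK1def
  set K2 : Finset V := (A2 ∩ Ca).toFinite.toFinset with hK2def
  have hK1coe : ↑K1 = A1 ∩ Cb := (A1 ∩ Cb).toFinite.coe_toFinset
  have hK2coe : ↑K2 = A2 ∩ Ca := (A2 ∩ Ca).toFinite.coe_toFinset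
  -- adjacency of Cb to S2 and Ca to S1
  have hCbS2 : ∀ c ∈ Cb, ∀ y ∈ S2, G.Adj c y := by
    intro c hc y hy
    rcases hy with hy | hy
    · exact hCbV2 c hc y hy
    · exact hC (Or.inr hc) (Or.inl hy)
        (fun h => Set.disjoint_right.1 hdab hc (h ▸ hy))
  have hCaS1 : ∀ c ∈ Ca, ∀ y ∈ S1, G.Adj c y := by
    intro c hc y hy
    rcases hy with hy | hy
    · exact hCaV1 c hc y hy
    · exact hC (Or.inl hc) (Or.inr hy)
        (fun h => Set.disjoint_left.1 hdab hc (h ▸ hy))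
  apply mnpd_univ_fails hmnpd (A1 ∪ A2) (B1 ∪ B2)
  refine ⟨?_, ?_, ?_, ?_⟩
  · -- union is everything
    have hSS : S1 ∪ S2 = Set.univ := by
      rw [hS1, hS2, ← hcover]
      ext x
      simp only [Set.mem_union]
      tauto
    rw [Set.union_union_union_comm, hu1, hu2, hSS]
  · -- disjointness
    rw [Set.disjoint_union_left, Set.disjoint_union_right, Set.disjoint_union_right]
    refine ⟨⟨hdj1, ?_⟩, ⟨?_, hdj2⟩⟩
    · exact (hS1S2.mono hA1S1 hB2S2)
    · exact (hS1S2.mono hB1S1 hA2S2).symm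
  · -- perfection
    rw [isPerfect_iff_perfOn]
    apply perfOn_union A1 A2 K1 K2 hp1 hp2 (hS1S2.mono hA1S1 hA2S2)
    · rw [hK1coe]; exact Set.inter_subset_left
    · rw [hK2coe]; exact Set.inter_subset_left
    · rw [hK1coe]
      exact hC.subset ((Set.inter_subset_right).trans Set.subset_union_right)
    · rw [hK2coe]
      exact hC.subset ((Set.inter_subset_right).trans Set.subset_union_left)
    · intro x hx y hy
      rw [← Finset.mem_coe, hK1coe] at hx
      exact hCbS2 x hx.2 y (hA2S2 hy)
    · intro x hx y hy
      rw [← Finset.mem_coe, hK2coe] at hx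
      exact hCaS1 x hx.2 y (hA1S1 hy)
    · intro x hx y hy hadj
      rcases hA1S1 hx with hxV | hxC
      · rcases hA2S2 hy with hyV | hyC
        · exact absurd hadj (hnoedge x hxV y hyV)
        · exact Or.inr (by rw [← Finset.mem_coe, hK2coe]; exact ⟨hy, hyC⟩)
      · exact Or.inl (by rw [← Finset.mem_coe, hK1coe]; exact ⟨hx, hxC⟩)
  · -- the clique number drops
    obtain ⟨Q, hQB, hQc, hQcard⟩ := exists_cn_clique (G := G) (B1 ∪ B2)
    set Q1 : Finset V := Q.filter (· ∈ S1) with hQ1def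
    set Q2 : Finset V := Q.filter (· ∉ S1) with hQ2def
    have hQsplit : Q = Q1 ∪ Q2 := by
      rw [hQ1def, hQ2def, Finset.filter_union_filter_not_eq]
    have hQdisj : Disjoint Q1 Q2 := by
      rw [hQ1def, hQ2def]
      exact Finset.disjoint_filter_filter_not Q Q (· ∈ S1)
    have hQ1B1 : ↑Q1 ⊆ B1 := by
      intro x hx
      rw [hQ1def, Finset.coe_filter] at hx
      rcases hQB hx.1 with h | h
      · exact h
      · exact absurd (hB2S2 h) (fun hc => Set.disjoint_left.1 hS1S2 hx.2 hc)
    have hQ2B2 : ↑Q2 ⊆ B2 := by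
      intro x hx
      rw [hQ2def, Finset.coe_filter] at hx
      rcases hQB hx.1 with h | h
      · exact absurd (hB1S1 h) hx.2
      · exact h
    have hQ1c : G.IsClique ↑Q1 := hQc.subset (by rw [hQsplit]; simp [Finset.coe_union])
    have hQ2c : G.IsClique ↑Q2 := hQc.subset (by rw [hQsplit]; simp [Finset.coe_union])
    have hcardQ : Q1.card + Q2.card = Q.card := by
      rw [hQsplit, Finset.card_union_of_disjoint hQdisj]
    -- find a strictly bigger clique
    have hbig : ∃ R : Finset V, G.IsClique ↑R ∧ Q.card < R.card := by
      by_cases hcase : ∃ q ∈ Q1, q ∈ V1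
      · -- all of Q2 lies in Ca
        obtain ⟨q, hqQ1, hqV1⟩ := hcase
        have hQ2Ca : ↑Q2 ⊆ Ca := by
          intro y hy
          have hyB2 := hQ2B2 hy
          rcases hB2S2 hyB2 with hyV | hyC
          · exfalso
            have hne : q ≠ y := by
              intro h
              subst h
              exact Set.disjoint_left.1 hd12 hqV1 hyV
            have := hQc (by rw [hQsplit]; simp [Finset.mem_coe]; left; exact hqQ1)
              (by rw [hQsplit]; simp [Finset.mem_coe]; right; exact hy) hne
            exact hnoedge q hqV1 y hyV this
          · exact hyC
        obtain ⟨Q1', hQ1'S, hQ1'c, hQ1'card⟩ := hep1 Q1 hQ1B1 hQ1c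
        refine ⟨Q1' ∪ Q2, ?_, ?_⟩
        · rw [Finset.coe_union]
          apply isClique_union hQ1'c hQ2c
          intro x hx y hy hne
          exact (hCaS1 y (hQ2Ca hy) x (hQ1'S hx)).symm
        · have hdisj' : Disjoint Q1' Q2 := by
            rw [Finset.disjoint_left]
            intro a ha haQ2
            have := hQ2B2 haQ2
            exact Set.disjoint_left.1 hS1S2 (hQ1'S ha) (hB2S2 this)
          rw [Finset.card_union_of_disjoint hdisj']
          omega
      · -- Q1 ⊆ Cb
        push_neg at hcase
        have hQ1Cb : ↑Q1 ⊆ Cb := by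
          intro x hx
          rcases hB1S1 (hQ1B1 hx) with hxV | hxC
          · exact absurd hxV (hcase x hx)
          · exact hxC
        obtain ⟨Q2', hQ2'S, hQ2'c, hQ2'card⟩ := hep2 Q2 hQ2B2 hQ2c
        refine ⟨Q1 ∪ Q2', ?_, ?_⟩
        · rw [Finset.coe_union]
          apply isClique_union hQ1c hQ2'c
          intro x hx y hy hne
          exact hCbS2 x (hQ1Cb hx) y (hQ2'S hy)
        · have hdisj' : Disjoint Q1 Q2' := by
            rw [Finset.disjoint_left]
            intro a ha haQ2
            exact Set.disjoint_left.1 hS1S2 (hB1S1 (hQ1B1 ha)) (hQ2'S haQ2)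
          rw [Finset.card_union_of_disjoint hdisj']
          omega
    obtain ⟨R, hRc, hRcard⟩ := hbig
    calc (G.induce (B1 ∪ B2)).cliqueNum = Q.card := hQcard.symm
      _ < R.card := hRcard
      _ ≤ (G.induce Set.univ).cliqueNum := card_le_cn (by simp) hRc

/-- The normalization move: if `c ∈ C` is not complete to `V1` and has no boundary edge
in `V1`, we can shrink the cutset. -/
lemma config_move (C V1 V2 : Set V) (hC : G.IsClique C)
    (hV2ne : V2.Nonempty) (hdisj : Disjoint V1 V2) (hunion : V1 ∪ V2 = Cᶜ)
    (hnoedge : ∀ x ∈ V1, ∀ y ∈ V2, ¬ G.Adj x y)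
    (c : V) (hc : c ∈ C)
    (hncomp : ¬ ∀ x ∈ V1, G.Adj c x)
    (hnbd : ¬ ∃ x ∈ V1, ∃ y ∈ V1, G.Adj c y ∧ ¬ G.Adj c x ∧ G.Adj x y) :
    ∃ V1' V2' : Set V, G.IsClique (C \ {c}) ∧ V1'.Nonempty ∧ V2'.Nonempty ∧
      Disjoint V1' V2' ∧ V1' ∪ V2' = (C \ {c})ᶜ ∧
      (∀ x ∈ V1', ∀ y ∈ V2', ¬ G.Adj x y) := by
  classical
  have hV1C : Disjoint V1 C := by
    rw [Set.disjoint_right]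
    intro a haC haV1
    have : a ∈ Cᶜ := hunion ▸ Or.inl haV1
    exact this haC
  have hV2C : Disjoint V2 C := by
    rw [Set.disjoint_right]
    intro a haC haV2
    have : a ∈ Cᶜ := hunion ▸ Or.inr haV2
    exact this haC
  push_neg at hncomp
  obtain ⟨x0, hx0, hx0n⟩ := hncomp
  refine ⟨{x ∈ V1 | ¬ G.Adj c x}, V2 ∪ {c} ∪ {x ∈ V1 | G.Adj c x},
    hC.subset Set.diff_subset, ⟨x0, hx0, hx0n⟩, Or.inl (Or.inr rfl) |> fun h => ⟨c, h⟩, ?_, ?_, ?_⟩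
  · rw [Set.disjoint_union_right, Set.disjoint_union_right]
    refine ⟨⟨?_, ?_⟩, ?_⟩
    · exact hdisj.mono_left (Set.sep_subset _ _)
    · rw [Set.disjoint_singleton_right]
      intro h
      exact Set.disjoint_left.1 hV1C h.1 hc
    · rw [Set.disjoint_left]
      rintro a ⟨ha1, hna⟩ ⟨_, ha2⟩
      exact hna ha2
  · ext a
    simp only [Set.mem_union, Set.mem_setOf_eq, Set.mem_compl_iff, Set.mem_diff,
      Set.mem_singleton_iff]
    constructor
    · rintro (⟨h1, _⟩ | ((h2 | rfl) | ⟨h1, _⟩))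
      · intro hmem
        exact Set.disjoint_left.1 hV1C h1 hmem.1
      · intro hmem
        exact Set.disjoint_left.1 hV2C h2 hmem.1
      · intro hmem
        exact hmem.2 rfl
      · intro hmem
        exact Set.disjoint_left.1 hV1C h1 hmem.1
    · intro h
      by_cases hac : a = c
      · exact Or.inr (Or.inl (Or.inr hac))
      · have haC : a ∉ C := fun hmem => h ⟨hmem, hac⟩
        have : a ∈ V1 ∪ V2 := hunion ▸ haC
        rcases this with h1 | h2
        · by_cases hadj : G.Adj c a
          · exact Or.inr (Or.inr ⟨h1, hadj⟩)
          · exact Or.inl ⟨h1, hadj⟩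
        · exact Or.inr (Or.inl (Or.inl h2))
  · rintro x ⟨hx1, hxn⟩ y ((hy | rfl) | ⟨hy1, hya⟩)
    · exact hnoedge x hx1 y hy
    · exact fun h => hxn h.symm
    · intro hadj
      exact hnbd ⟨x, hx1, y, hy1, hya, hxn, hadj⟩

end Helpers

/-- A `P₅`-free minimally non-perfectly divisible graph cannot contain a clique cutset. -/
theorem no_clique_cutset_in_P5_free_MNPD {V : Type*} [Fintype V] (G : SimpleGraph V)
    (hP5 : P5Free G) (hmnpd : MNPD G) :
    ∀ C : Set V, ¬ IsCliqueCutset G C := by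
  classical
  intro C0 hcut
  obtain ⟨hC0clique, V1, V2, hV1ne0, hV2ne0, hdisj0, hunion0, hnoedge0⟩ := hcut
  suffices h : ∀ n : ℕ, ∀ C V1 V2 : Set V, C.ncard = n → G.IsClique C → V1.Nonempty →
      V2.Nonempty → Disjoint V1 V2 → V1 ∪ V2 = Cᶜ →
      (∀ x ∈ V1, ∀ y ∈ V2, ¬ G.Adj x y) → False by
    exact h C0.ncard C0 V1 V2 rfl hC0clique hV1ne0 hV2ne0 hdisj0 hunion0 hnoedge0
  intro n
  induction n using Nat.strong_induction_on with
  | _ n ih =>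
  intro C V1 V2 hn hCclique hV1ne hV2ne hdisj hunion hnoedge
  have hV1C : Disjoint V1 C := by
    rw [Set.disjoint_right]
    intro a haC haV1
    have : a ∈ Cᶜ := hunion ▸ Or.inl haV1
    exact this haC
  have hV2C : Disjoint V2 C := by
    rw [Set.disjoint_right]
    intro a haC haV2
    have : a ∈ Cᶜ := hunion ▸ Or.inr haV2
    exact this haC
  by_cases hcase1 : ∃ c ∈ C, (¬ ∀ x ∈ V1, G.Adj c x) ∧
      ¬ ∃ x ∈ V1, ∃ y ∈ V1, G.Adj c y ∧ ¬ G.Adj c x ∧ G.Adj x y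
  · obtain ⟨c, hc, h1, h2⟩ := hcase1
    obtain ⟨V1', V2', p1, p2, p3, p4, p5, p6⟩ :=
      config_move C V1 V2 hCclique hV2ne hdisj hunion hnoedge c hc h1 h2
    exact ih (C \ {c}).ncard
      (hn ▸ Set.ncard_diff_singleton_lt_of_mem hc C.toFinite) _ _ _ rfl p1 p2 p3 p4 p5 p6
  by_cases hcase2 : ∃ c ∈ C, (¬ ∀ x ∈ V2, G.Adj c x) ∧
      ¬ ∃ x ∈ V2, ∃ y ∈ V2, G.Adj c y ∧ ¬ G.Adj c x ∧ G.Adj x y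
  · obtain ⟨c, hc, h1, h2⟩ := hcase2
    obtain ⟨V2', V1', p1, p2, p3, p4, p5, p6⟩ :=
      config_move C V2 V1 hCclique hV1ne hdisj.symm (by rw [Set.union_comm]; exact hunion)
        (fun x hx y hy hadj => hnoedge y hy x hx hadj.symm) c hc h1 h2
    exact ih (C \ {c}).ncard
      (hn ▸ Set.ncard_diff_singleton_lt_of_mem hc C.toFinite) _ _ _ rfl p1 p2 p3 p4 p5 p6
  push_neg at hcase1 hcase2
  -- no `c` has boundary edges on both sides, by `P₅`-freeness
  have hnotboth : ∀ c ∈ C,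
      (∃ x ∈ V1, ∃ y ∈ V1, G.Adj c y ∧ ¬ G.Adj c x ∧ G.Adj x y) →
      (∃ x ∈ V2, ∃ y ∈ V2, G.Adj c y ∧ ¬ G.Adj c x ∧ G.Adj x y) → False := by
    rintro c hc ⟨x, hx, y, hy, hcy, hcx, hxy⟩ ⟨w, hw, u, hu, hcu, hcw, hwu⟩
    refine p5_builder hP5 x y c u w hxy hcy.symm hcu hwu.symm
      (fun h => hcx h.symm) (hnoedge x hx u hu) (hnoedge x hx w hw)
      (hnoedge y hy u hu) (hnoedge y hy w hw) hcw ?_ ?_ ?_ ?_ ?_ ?_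
    · exact fun h => Set.disjoint_left.1 hV1C hx (h ▸ hc)
    · exact fun h => Set.disjoint_left.1 hdisj hx (h ▸ hu)
    · exact fun h => Set.disjoint_left.1 hdisj hx (h ▸ hw)
    · exact fun h => Set.disjoint_left.1 hdisj hy (h ▸ hu)
    · exact fun h => Set.disjoint_left.1 hdisj hy (h ▸ hw)
    · exact fun h => Set.disjoint_left.1 hV2C hw (h.symm ▸ hc)
  set Ca : Set V := {c ∈ C | ∀ x ∈ V1, G.Adj c x} with hCa
  set Cb : Set V := C \ Ca with hCb
  have hCbV2 : ∀ c ∈ Cb, ∀ x ∈ V2, G.Adj c x := by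
    intro c hcb
    rcases hcb with ⟨hcC, hcn⟩
    have hn1 : ¬ ∀ x ∈ V1, G.Adj c x := fun hcomp => hcn ⟨hcC, hcomp⟩
    push_neg at hn1
    have hbd1 := hcase1 c hcC hn1
    by_contra hncomp2
    push_neg at hncomp2
    obtain ⟨x, hx, hnadj⟩ := hncomp2
    have hbd2 := hcase2 c hcC ⟨x, hx, hnadj⟩
    exact hnotboth c hcC hbd1 hbd2
  have hCaCb : Ca ∪ Cb = C := by
    rw [hCb, Set.union_diff_cancel]
    rw [hCa]
    exact Set.sep_subset _ _
  refine construct_contradiction hmnpd V1 V2 Ca Cb hV1ne hV2ne hdisj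
    (hV1C.mono_right (hCaCb ▸ Set.subset_union_left))
    (hV1C.mono_right (hCaCb ▸ Set.subset_union_right))
    (hV2C.mono_right (hCaCb ▸ Set.subset_union_left))
    (hV2C.mono_right (hCaCb ▸ Set.subset_union_right))
    (Set.disjoint_sdiff_right.mono_left (le_refl _))
    ?_ (hCaCb ▸ hCclique) (fun c hc => hc.2) hCbV2 hnoedge
  rw [Set.union_assoc, hCaCb, hunion, Set.compl_union_self]
end

section
/- In a minimally non-perfectly divisible graph G, every vertex belongs to a largest clique of G, i.e., for every vertex x of G there is a clique K of G with |K| = ω(G) and x ∈ K. -/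
open SimpleGraph

section Helpers

variable {α β : Type*}

lemma aux_cliqueNum_le_of_embedding {G : SimpleGraph α} {H : SimpleGraph β}
    [Finite α] [Finite β] (f : G ↪g H) : G.cliqueNum ≤ H.cliqueNum := by
  classical
  haveI := Fintype.ofFinite α
  haveI := Fintype.ofFinite β
  obtain ⟨K, hK⟩ := G.exists_isNClique_cliqueNum
  have hclique : H.IsClique ↑(K.map f.toEmbedding) := by
    intro a ha b hb hab
    simp only [Finset.coe_map, Set.mem_image, Finset.mem_coe] at ha hb
    obtain ⟨a', ha', rfl⟩ := ha
    obtain ⟨b', hb', rfl⟩ := hb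
    exact f.map_rel_iff.mpr (hK.isClique ha' hb' (fun h => hab (by rw [h])))
  have : (K.map f.toEmbedding).card ≤ H.cliqueNum := hclique.card_le_cliqueNum
  rwa [Finset.card_map, hK.card_eq] at this

lemma aux_cliqueNum_eq_of_iso {G : SimpleGraph α} {H : SimpleGraph β}
    [Finite α] [Finite β] (e : G ≃g H) : G.cliqueNum = H.cliqueNum :=
  le_antisymm (aux_cliqueNum_le_of_embedding e.toEmbedding)
    (aux_cliqueNum_le_of_embedding e.symm.toEmbedding)

lemma aux_chromaticNumber_eq_of_iso {G : SimpleGraph α} {H : SimpleGraph β}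
    (e : G ≃g H) : G.chromaticNumber = H.chromaticNumber :=
  le_antisymm (chromaticNumber_mono_of_hom e.toEmbedding.toHom)
    (chromaticNumber_mono_of_hom e.symm.toEmbedding.toHom)

/-- Pushing an isomorphism to induced subgraphs. -/
def auxIsoInduce {G : SimpleGraph α} {H : SimpleGraph β} (e : G ≃g H) (s : Set α) :
    G.induce s ≃g H.induce (e '' s) where
  toEquiv := e.toEquiv.image s
  map_rel_iff' := by
    intro a b
    exact e.map_rel_iff

/-- `(G[s])[A] ≅ G[A]` viewing `A ⊆ s` as a subset of the whole vertex set. -/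
noncomputable def auxInduceInduceIso (G : SimpleGraph α) (s : Set α) (A : Set s) :
    (G.induce s).induce A ≃g G.induce (Subtype.val '' A) where
  toEquiv := Equiv.Set.image Subtype.val A Subtype.val_injective
  map_rel_iff' := by
    intro a b
    simp [Equiv.Set.image, Equiv.Set.imageOfInjOn, comap_adj]

lemma aux_isPerfect_of_iso {G : SimpleGraph α} {H : SimpleGraph β} [Finite α] [Finite β]
    (e : G ≃g H) (h : IsPerfect G) : IsPerfect H := by
  intro s
  have him : ⇑e '' (⇑e.symm '' s) = s := by
    ext b
    simp [Set.mem_image]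
  have e2 := auxIsoInduce e (⇑e.symm '' s)
  rw [him] at e2
  rw [← aux_chromaticNumber_eq_of_iso e2, ← aux_cliqueNum_eq_of_iso e2]
  exact h _

lemma aux_edgeSet_nonempty_of_iso {G : SimpleGraph α} {H : SimpleGraph β}
    (e : G ≃g H) (h : G.edgeSet.Nonempty) : H.edgeSet.Nonempty := by
  obtain ⟨ed, hed⟩ := h
  revert hed
  refine Sym2.ind (fun a b hab => ?_) ed
  rw [mem_edgeSet] at hab
  exact ⟨s(e a, e b), (mem_edgeSet _).mpr (e.map_rel_iff.mpr hab)⟩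

/-- Lift a clique of `G` contained in `s` to a clique of `G[s]`. -/
lemma aux_isNClique_induce {V : Type*} {G : SimpleGraph V} {n : ℕ} {s : Set V} {K : Finset V}
    (hK : G.IsNClique n K) (hKs : ↑K ⊆ s) : ∃ K' : Finset s, (G.induce s).IsNClique n K' := by
  classical
  refine ⟨K.subtype (· ∈ s), ?_, ?_⟩
  · rintro ⟨a, has⟩ ha ⟨b, hbs⟩ hb hab
    simp only [Finset.mem_coe, Finset.mem_subtype] at ha hb
    have : G.Adj a b := hK.isClique ha hb (fun h => hab (by simp [h]))
    exact this
  · rw [Finset.card_subtype, Finset.filter_true_of_mem (fun v hv => hKs hv), hK.card_eq]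

/-- Push a clique of `G[s]` down to a clique of `G`. -/
lemma aux_isNClique_map_induce {V : Type*} {G : SimpleGraph V} {s : Set V} {K : Finset s} {n : ℕ}
    (h : (G.induce s).IsNClique n K) :
    G.IsNClique n (K.map (Function.Embedding.subtype _)) := by
  constructor
  · intro a ha b hb hab
    simp only [Finset.coe_map, Set.mem_image, Finset.mem_coe,
      Function.Embedding.coe_subtype] at ha hb
    obtain ⟨a', ha', rfl⟩ := ha
    obtain ⟨b', hb', rfl⟩ := hb
    exact h.isClique ha' hb' (by rintro rfl; exact hab rfl)
  · rw [Finset.card_map, h.card_eq]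

/-- Transfer a good partition of `(G[s])[univ]` to a good partition of `G[s]`. -/
lemma aux_goodPartition_push {V : Type*} [Finite V] (G : SimpleGraph V) (s : Set V)
    (A B : Set s) (h : GoodPartition (G.induce s) Set.univ A B) :
    GoodPartition G s (Subtype.val '' A) (Subtype.val '' B) := by
  obtain ⟨hU, hD, hP, hL⟩ := h
  refine ⟨?_, ?_, ?_, ?_⟩
  · rw [← Set.image_union, hU, Set.image_univ, Subtype.range_coe]
  · exact (Set.disjoint_image_iff Subtype.val_injective).mpr hD
  · exact aux_isPerfect_of_iso (auxInduceInduceIso G s A) hP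
  · rw [← aux_cliqueNum_eq_of_iso (auxInduceInduceIso G s B),
      ← aux_cliqueNum_eq_of_iso (induceUnivIso (G.induce s))]
    exact hL

end Helpers

/-- In a minimally non-perfectly divisible graph, every vertex belongs to a largest clique. -/
theorem MNPD_every_vertex_in_largest_clique {V : Type*} [Fintype V] (G : SimpleGraph V)
    (hmnpd : MNPD G) :
    ∀ x : V, ∃ K : Finset V, G.IsNClique G.cliqueNum K ∧ x ∈ K := by
  classical
  intro x
  by_contra hcon
  push_neg at hcon
  set t : Set V := {x}ᶜ with ht
  have hxt : x ∉ t := by simp [ht]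
  have htne : t ≠ Set.univ := fun hh => hxt (hh ▸ Set.mem_univ x)
  have hPDt := hmnpd.2 t htne
  -- `ω(G - x) = ω(G)` since some maximum clique avoids `x`
  obtain ⟨K, hK⟩ := G.exists_isNClique_cliqueNum
  have hxK : x ∉ K := fun hx => hcon K hK hx
  have hKt : ↑K ⊆ t := by
    intro v hv
    simp only [ht, Set.mem_compl_iff, Set.mem_singleton_iff]
    rintro rfl
    exact hxK hv
  obtain ⟨K', hK'⟩ := aux_isNClique_induce hK hKt
  have hωt : (G.induce t).cliqueNum = G.cliqueNum := by
    refine le_antisymm (aux_cliqueNum_le_of_embedding (Embedding.induce t)) ?_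
    haveI := Fintype.ofFinite t
    have := hK'.isClique.card_le_cliqueNum
    rwa [hK'.card_eq] at this
  have hPD : PerfectlyDivisible G := by
    intro s hs
    by_cases hsu : s = Set.univ
    · subst hsu
      have hGe : G.edgeSet.Nonempty := aux_edgeSet_nonempty_of_iso (induceUnivIso G) hs
      have hω2 : 2 ≤ G.cliqueNum := by
        obtain ⟨ed, hed⟩ := hGe
        revert hed
        refine Sym2.ind (fun a b hab => ?_) ed
        rw [mem_edgeSet] at hab
        have hcl : G.IsClique (({a, b} : Finset V) : Set V) := by
          rw [Finset.coe_insert, Finset.coe_singleton]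
          exact isClique_pair.mpr (fun _ => hab)
        have hcard : ({a, b} : Finset V).card = 2 := Finset.card_pair hab.ne
        have := hcl.card_le_cliqueNum
        rwa [hcard] at this
      have het : (G.induce t).edgeSet.Nonempty := by
        haveI := Fintype.ofFinite t
        obtain ⟨L, hL⟩ := (G.induce t).exists_isNClique_cliqueNum
        have h2 : 1 < L.card := by
          rw [hL.card_eq, hωt]; exact hω2
        obtain ⟨a, ha, b, hb, hab⟩ := Finset.one_lt_card.mp h2
        exact ⟨s(a, b), (mem_edgeSet _).mpr (hL.isClique ha hb hab)⟩
      obtain ⟨A', B', hGP⟩ := hPDt Set.univ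
        (aux_edgeSet_nonempty_of_iso (induceUnivIso (G.induce t)).symm het)
      obtain ⟨hU, hD, hP, hL⟩ := hGP
      have hAB : Subtype.val '' A' ∪ Subtype.val '' B' = t := by
        rw [← Set.image_union, hU, Set.image_univ, Subtype.range_coe]
      set B : Set V := Subtype.val '' B' ∪ {x} with hB
      have hB'lt : (G.induce (Subtype.val '' B')).cliqueNum < G.cliqueNum := by
        rw [← hωt, ← aux_cliqueNum_eq_of_iso (auxInduceInduceIso G t B'),
          ← aux_cliqueNum_eq_of_iso (induceUnivIso (G.induce t))]
        exact hL
      refine ⟨Subtype.val '' A', B, ?_, ?_, ?_, ?_⟩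
      · rw [hB, ← Set.union_assoc, hAB, ht, Set.compl_union_self]
      · refine Set.disjoint_union_right.mpr
          ⟨(Set.disjoint_image_iff Subtype.val_injective).mpr hD, ?_⟩
        rw [Set.disjoint_singleton_right]
        intro hmem
        obtain ⟨⟨v, hvt⟩, _, hveq⟩ := hmem
        exact hxt (hveq ▸ hvt)
      · exact aux_isPerfect_of_iso (auxInduceInduceIso G t A') hP
      · rw [aux_cliqueNum_eq_of_iso (induceUnivIso G)]
        have hle : (G.induce B).cliqueNum ≤ G.cliqueNum :=
          aux_cliqueNum_le_of_embedding (Embedding.induce B)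
        rcases lt_or_eq_of_le hle with hlt | heq
        · exact hlt
        · exfalso
          haveI := Fintype.ofFinite B
          obtain ⟨L, hLc⟩ := (G.induce B).exists_isNClique_cliqueNum
          have hL₀ := aux_isNClique_map_induce hLc
          rw [heq] at hL₀
          have hxL₀ : x ∉ L.map (Function.Embedding.subtype _) := fun hx => hcon _ hL₀ hx
          have hsub : ↑(L.map (Function.Embedding.subtype (· ∈ B))) ⊆ Subtype.val '' B' := by
            intro v hv
            simp only [Finset.coe_map, Set.mem_image, Finset.mem_coe,
              Function.Embedding.coe_subtype] at hv
            obtain ⟨⟨v', hv'B⟩, hmem, rfl⟩ := hv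
            rcases hv'B with h1 | h2
            · exact h1
            · exfalso
              apply hxL₀
              rw [Set.mem_singleton_iff] at h2
              subst h2
              simp only [Finset.mem_map, Function.Embedding.coe_subtype]
              exact ⟨_, hmem, rfl⟩
          obtain ⟨L₁, hL₁⟩ := aux_isNClique_induce hL₀ hsub
          haveI := Fintype.ofFinite ↥(Subtype.val '' B')
          have := hL₁.isClique.card_le_cliqueNum
          rw [hL₁.card_eq] at this
          exact absurd (lt_of_le_of_lt this hB'lt) (lt_irrefl _)
    · obtain ⟨A', B', hGP⟩ := hmnpd.2 s hsu Set.univ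
        (aux_edgeSet_nonempty_of_iso (induceUnivIso (G.induce s)).symm hs)
      exact ⟨_, _, aux_goodPartition_push G s A' B' hGP⟩
  exact hmnpd.1 hPD
end

section
/- No minimally non-perfectly divisible graph contains a simplicial vertex. That is, if G is not perfectly divisible and every proper induced subgraph of G is perfectly divisible, then no vertex of G has a neighbourhood that induces a clique. -/
open SimpleGraph

section Helpers

variable {W W' : Type*}

lemma iso_chromaticNumber {G : SimpleGraph W} {G' : SimpleGraph W'} (f : G ≃g G') :
    G.chromaticNumber = G'.chromaticNumber :=
  le_antisymm (chromaticNumber_mono_of_hom f.toEmbedding.toHom)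
    (chromaticNumber_mono_of_hom f.symm.toEmbedding.toHom)

lemma isNClique_map_emb {G : SimpleGraph W} {G' : SimpleGraph W'} (f : G ↪g G') {n : ℕ}
    {s : Finset W} (h : G.IsNClique n s) :
    G'.IsNClique n (s.map f.toEmbedding) := by
  constructor
  · rintro a ha b hb hab
    simp only [Finset.coe_map, Set.mem_image, Finset.mem_coe] at ha hb
    obtain ⟨a', ha', rfl⟩ := ha
    obtain ⟨b', hb', rfl⟩ := hb
    exact f.map_rel_iff.mpr (h.1 ha' hb' (fun hh => hab (by rw [hh])))
  · rw [Finset.card_map]; exact h.2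

lemma cliqueNum_le_of_embedding_s4 [Fintype W'] {G : SimpleGraph W} {G' : SimpleGraph W'}
    (f : G ↪g G') : G.cliqueNum ≤ G'.cliqueNum := by
  classical
  apply csSup_le_csSup
  · refine ⟨Fintype.card W', ?_⟩
    rintro n ⟨s, hs⟩
    rw [← hs.2]
    exact Finset.card_le_univ s
  · exact ⟨0, ∅, isNClique_empty.mpr rfl⟩
  · rintro n ⟨s, hs⟩
    exact ⟨s.map f.toEmbedding, isNClique_map_emb f hs⟩

lemma iso_cliqueNum {G : SimpleGraph W} {G' : SimpleGraph W'} (f : G ≃g G') :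
    G.cliqueNum = G'.cliqueNum := by
  unfold SimpleGraph.cliqueNum
  congr 1
  ext n
  constructor
  · rintro ⟨s, hs⟩
    exact ⟨s.map f.toEmbedding.toEmbedding, isNClique_map_emb f.toEmbedding hs⟩
  · rintro ⟨s, hs⟩
    exact ⟨s.map f.symm.toEmbedding.toEmbedding, isNClique_map_emb f.symm.toEmbedding hs⟩

lemma cliqueNum_le_chrom [Fintype W] (G : SimpleGraph W) :
    (G.cliqueNum : ℕ∞) ≤ G.chromaticNumber := by
  obtain ⟨s, hs⟩ := G.exists_isNClique_cliqueNum
  have := hs.1.card_le_chromaticNumber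
  rwa [hs.2] at this

lemma cliqueNum_le_card [Fintype W] (G : SimpleGraph W) :
    G.cliqueNum ≤ Fintype.card W := by
  obtain ⟨s, hs⟩ := G.exists_isNClique_cliqueNum
  rw [← hs.2]
  exact Finset.card_le_univ s

noncomputable def induceInduceIso (G : SimpleGraph W) (s : Set W) (t : Set ↥s) :
    ((G.induce s).induce t) ≃g G.induce (Subtype.val '' t) where
  toEquiv := Equiv.Set.image Subtype.val t Subtype.val_injective
  map_rel_iff' := Iff.rfl

def induceIsoOfIso {G : SimpleGraph W} {G' : SimpleGraph W'} (f : G ≃g G') (s : Set W') :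
    G.induce (⇑f ⁻¹' s) ≃g G'.induce s where
  toEquiv := f.toEquiv.subtypeEquiv fun _ => Iff.rfl
  map_rel_iff' := f.map_rel_iff

lemma isPerfect_of_iso_s4 {G : SimpleGraph W} {G' : SimpleGraph W'} (f : G ≃g G')
    (h : IsPerfect G) : IsPerfect G' := by
  intro s
  rw [← iso_chromaticNumber (induceIsoOfIso f s), ← iso_cliqueNum (induceIsoOfIso f s)]
  exact h _

lemma adj_of_edgeSet_nonempty {G : SimpleGraph W} (h : G.edgeSet.Nonempty) :
    ∃ a b, G.Adj a b := by
  obtain ⟨e, he⟩ := h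
  induction e with
  | _ a b => exact ⟨a, b, he⟩

end Helpers



lemma bot_chrom_eq_cliqueNum (T : Type*) :
    (⊥ : SimpleGraph T).chromaticNumber = (((⊥ : SimpleGraph T).cliqueNum : ℕ∞)) := by
  cases isEmpty_or_nonempty T with
  | inl h =>
    rw [chromaticNumber_eq_zero_of_isEmpty]
    have h0 : (⊥ : SimpleGraph T).cliqueNum = 0 := by
      unfold SimpleGraph.cliqueNum
      have hset : {n | ∃ s, (⊥ : SimpleGraph T).IsNClique n s} = {0} := by
        ext n
        constructor
        · rintro ⟨s, hs⟩
          have : s = ∅ := Finset.eq_empty_of_forall_notMem (fun a _ => isEmptyElim a)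
          subst this
          simpa using hs.2.symm
        · rintro rfl
          exact ⟨∅, isNClique_empty.mpr rfl⟩
      rw [hset, csSup_singleton]
    rw [h0]
    simp
  | inr h =>
    rw [chromaticNumber_bot]
    have h1 : (⊥ : SimpleGraph T).cliqueNum = 1 := by
      have hb : ∀ n ∈ {n | ∃ s, (⊥ : SimpleGraph T).IsNClique n s}, n ≤ 1 := by
        rintro n ⟨s, hs⟩
        rw [← hs.2]
        refine Finset.card_le_one.mpr (fun a ha b hb => ?_)
        by_contra hab
        exact hs.1 (Finset.mem_coe.mpr ha) (Finset.mem_coe.mpr hb) hab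
      have h1 : 1 ∈ {n | ∃ s, (⊥ : SimpleGraph T).IsNClique n s} := by
        refine ⟨{Classical.arbitrary T}, ⟨?_, Finset.card_singleton _⟩⟩
        simp [SimpleGraph.IsClique]
      exact le_antisymm (csSup_le ⟨1, h1⟩ hb) (le_csSup ⟨1, hb⟩ h1)
    rw [h1]
    rfl

lemma chrom_eq_of_simplicial {W : Type*} [Fintype W] (K : SimpleGraph W) (x : W)
    (hx : K.IsClique (K.neighborSet x))
    (h : (K.induce ({x}ᶜ : Set W)).chromaticNumber
        = ((K.induce ({x}ᶜ : Set W)).cliqueNum : ℕ∞)) :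
    K.chromaticNumber = (K.cliqueNum : ℕ∞) := by
  classical
  set n := (K.induce ({x}ᶜ : Set W)).cliqueNum with hn
  have hcol : (K.induce ({x}ᶜ : Set W)).Colorable n := by
    rw [← chromaticNumber_le_iff_colorable, h]
  obtain ⟨c⟩ := hcol
  have hmem : ∀ v ∈ K.neighborSet x, v ∈ ({x}ᶜ : Set W) := fun v hv =>
    Set.mem_compl_singleton_iff.mpr (SimpleGraph.Adj.ne' hv)
  have hnle : n ≤ K.cliqueNum := by
    have := cliqueNum_le_of_embedding_s4 (SimpleGraph.Embedding.induce ({x}ᶜ : Set W) (G := K))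
    rwa [← hn] at this
  refine le_antisymm ?_ (cliqueNum_le_chrom K)
  by_cases hcase : ∃ i : Fin n, ∀ v, ∀ hv : v ∈ K.neighborSet x, c ⟨v, hmem v hv⟩ ≠ i
  · obtain ⟨i, hi⟩ := hcase
    have hcol2 : K.Colorable n := by
      refine ⟨Coloring.mk (fun v => if hv : v = x then i
        else c ⟨v, Set.mem_compl_singleton_iff.mpr hv⟩) ?_⟩
      intro v w hadj
      by_cases hv : v = x <;> by_cases hw : w = x
      · exact absurd (hv ▸ hw ▸ hadj) (K.irrefl)
      · subst hv
        simp only [dif_pos rfl, dif_neg hw]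
        exact fun hh => hi w hadj hh.symm
      · subst hw
        simp only [dif_pos rfl, dif_neg hv]
        exact hi v hadj.symm
      · simp only [dif_neg hv, dif_neg hw]
        exact c.valid hadj
    calc K.chromaticNumber ≤ (n : ℕ∞) := hcol2.chromaticNumber_le
      _ ≤ (K.cliqueNum : ℕ∞) := Nat.cast_le.mpr hnle
  · push_neg at hcase
    have hsurj : Function.Surjective
        (fun v : ↥(K.neighborSet x) => c ⟨v.1, hmem v.1 v.2⟩) := by
      intro i
      obtain ⟨v, hv, hc⟩ := hcase i
      exact ⟨⟨v, hv⟩, hc⟩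
    have hdn : n ≤ Fintype.card ↥(K.neighborSet x) := by
      have := Fintype.card_le_of_surjective _ hsurj
      simpa using this
    set t : Finset W := insert x (K.neighborSet x).toFinset with ht
    have hclique : K.IsClique ↑t := by
      have hcoe : (↑t : Set W) = insert x (K.neighborSet x) := by
        rw [ht, Finset.coe_insert, Set.coe_toFinset]
      rw [hcoe]
      intro a ha b hb hab
      rw [Set.mem_insert_iff] at ha hb
      rcases ha with rfl | ha
      · rcases hb with rfl | hb
        · exact absurd rfl hab
        · exact hb
      · rcases hb with rfl | hb
        · exact ha.symm
        · exact hx ha hb hab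
    have hcard : t.card = Fintype.card ↥(K.neighborSet x) + 1 := by
      rw [ht, Finset.card_insert_of_notMem (by simp), Set.toFinset_card]
    have hω : n + 1 ≤ K.cliqueNum := by
      have hle := SimpleGraph.IsClique.card_le_cliqueNum (tc := hclique)
      omega
    have hcol2 : K.Colorable (n + 1) := by
      refine ⟨Coloring.mk (fun v => if hv : v = x then Fin.last n
        else (c ⟨v, Set.mem_compl_singleton_iff.mpr hv⟩).castSucc) ?_⟩
      intro v w hadj
      by_cases hv : v = x <;> by_cases hw : w = x
      · exact absurd (hv ▸ hw ▸ hadj) (K.irrefl)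
      · subst hv
        simp only [dif_pos rfl, dif_neg hw]
        exact (Fin.castSucc_lt_last _).ne'
      · subst hw
        simp only [dif_pos rfl, dif_neg hv]
        exact (Fin.castSucc_lt_last _).ne
      · simp only [dif_neg hv, dif_neg hw]
        exact fun hh => c.valid (v := ⟨v, Set.mem_compl_singleton_iff.mpr hv⟩)
          (w := ⟨w, Set.mem_compl_singleton_iff.mpr hw⟩) hadj (Fin.castSucc_inj.mp hh)
    calc K.chromaticNumber ≤ ((n + 1 : ℕ) : ℕ∞) := hcol2.chromaticNumber_le
      _ ≤ (K.cliqueNum : ℕ∞) := Nat.cast_le.mpr hω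

lemma exists_goodPartition_of_PD {W : Type*} {G : SimpleGraph W} {s : Set W}
    (hpd : PerfectlyDivisible (G.induce s)) (he : (G.induce s).edgeSet.Nonempty) :
    ∃ A B : Set W, GoodPartition G s A B := by
  obtain ⟨a, b, hab⟩ := adj_of_edgeSet_nonempty he
  obtain ⟨A, B, hun, hdis, hperf, hlt⟩ := hpd Set.univ
    ⟨s(⟨a, Set.mem_univ a⟩, ⟨b, Set.mem_univ b⟩), (SimpleGraph.mem_edgeSet _).mpr hab⟩
  refine ⟨Subtype.val '' A, Subtype.val '' B, ?_, ?_, ?_, ?_⟩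
  · rw [← Set.image_union, hun, Set.image_univ, Subtype.range_coe]
  · exact (Set.disjoint_image_iff Subtype.val_injective).mpr hdis
  · exact isPerfect_of_iso_s4 (induceInduceIso G s A) hperf
  · rw [← iso_cliqueNum (induceInduceIso G s B)]
    have h2 := iso_cliqueNum (induceInduceIso G s Set.univ)
    rw [Set.image_univ, Subtype.range_coe] at h2
    rw [← h2]
    exact hlt


/-- No minimally non-perfectly divisible graph contains a simplicial vertex
(a vertex whose neighbourhood induces a clique). -/
theorem MNPD_no_simplicial_vertex {V : Type*} [Fintype V] (G : SimpleGraph V)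
    (hmnpd : MNPD G) :
    ∀ x : V, ¬ G.IsClique (G.neighborSet x) := by
  classical
  intro x hx
  obtain ⟨hnpd, hmin⟩ := hmnpd
  unfold PerfectlyDivisible at hnpd
  push_neg at hnpd
  obtain ⟨s, hse, hnogood⟩ := hnpd
  by_cases hsu : s = Set.univ
  case neg =>
    obtain ⟨A, B, hgood⟩ := exists_goodPartition_of_PD (hmin s hsu) hse
    exact hnogood A B hgood
  subst hsu
  have htne : ({x}ᶜ : Set V) ≠ Set.univ := by
    intro h
    have hxmem : x ∈ ({x}ᶜ : Set V) := h ▸ Set.mem_univ x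
    exact hxmem rfl
  have hpd := hmin _ htne
  have hcle : (G.induce ({x}ᶜ : Set V)).cliqueNum
      ≤ (G.induce (Set.univ : Set V)).cliqueNum := by
    rw [iso_cliqueNum (induceUnivIso G)]
    exact cliqueNum_le_of_embedding_s4 (SimpleGraph.Embedding.induce _)
  by_cases hedge : (G.induce ({x}ᶜ : Set V)).edgeSet.Nonempty
  · obtain ⟨A', B', hun, hdis, hperf, hlt⟩ := exists_goodPartition_of_PD hpd hedge
    have claim1 : ∀ w : Set V, w ⊆ A' →
        (G.induce w).chromaticNumber = ((G.induce w).cliqueNum : ℕ∞) := by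
      intro w hw
      have h1 := hperf {a : ↥A' | ↑a ∈ w}
      rw [iso_chromaticNumber (induceInduceIso G A' _),
        iso_cliqueNum (induceInduceIso G A' _)] at h1
      have himg : Subtype.val '' {a : ↥A' | ↑a ∈ w} = w := by
        ext v
        constructor
        · rintro ⟨⟨v, hvA⟩, hvw, rfl⟩
          exact hvw
        · intro hv
          exact ⟨⟨v, hw hv⟩, hv, rfl⟩
      rwa [himg] at h1
    have claim2 : ∀ w : Set V, w ⊆ A' ∪ {x} →
        (G.induce w).chromaticNumber = ((G.induce w).cliqueNum : ℕ∞) := by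
      intro w hw
      by_cases hxw : x ∈ w
      · haveI : Fintype ↥w := Fintype.ofFinite _
        apply chrom_eq_of_simplicial (G.induce w) ⟨x, hxw⟩
        · intro a ha b hb hab
          exact hx ha hb (fun hh => hab (Subtype.ext hh))
        · rw [iso_chromaticNumber (induceInduceIso G w _),
            iso_cliqueNum (induceInduceIso G w _)]
          have himg : Subtype.val '' ({(⟨x, hxw⟩ : ↥w)}ᶜ : Set ↥w) = w \ {x} := by
            ext v
            constructor
            · rintro ⟨⟨v, hvw⟩, hvne, rfl⟩
              refine ⟨hvw, ?_⟩
              simp only [Set.mem_compl_singleton_iff] at hvne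
              exact fun hh => hvne (Subtype.ext hh)
            · rintro ⟨hvw, hvx⟩
              refine ⟨⟨v, hvw⟩, ?_, rfl⟩
              simp only [Set.mem_compl_singleton_iff]
              exact fun hh => hvx (congrArg Subtype.val hh)
          rw [himg]
          refine claim1 _ (fun v hv => ?_)
          rcases hw hv.1 with hvA | hvx
          · exact hvA
          · exact absurd hvx hv.2
      · refine claim1 w (fun v hv => ?_)
        rcases hw hv with hvA | hvx
        · exact hvA
        · exact absurd (Set.mem_singleton_iff.mp hvx ▸ hv) hxw
    refine hnogood (A' ∪ {x}) B' ⟨?_, ?_, ?_, ?_⟩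
    · rw [Set.union_right_comm, hun, Set.compl_union_self]
    · refine Set.disjoint_union_left.mpr ⟨hdis, Set.disjoint_singleton_left.mpr ?_⟩
      intro hxB
      have hxc : x ∈ ({x}ᶜ : Set V) := hun ▸ Set.mem_union_right _ hxB
      exact hxc rfl
    · intro u
      rw [iso_chromaticNumber (induceInduceIso G (A' ∪ {x}) u),
        iso_cliqueNum (induceInduceIso G (A' ∪ {x}) u)]
      refine claim2 _ ?_
      rintro v ⟨⟨v, hv⟩, _, rfl⟩
      exact hv
    · exact lt_of_lt_of_le hlt hcle
  · have hbot : G.induce ({x}ᶜ : Set V) = ⊥ := by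
      rw [← SimpleGraph.edgeSet_eq_empty]
      exact Set.not_nonempty_iff_eq_empty.mp hedge
    obtain ⟨a, b, hab⟩ := adj_of_edgeSet_nonempty hse
    refine hnogood ({x}ᶜ) {x} ⟨Set.compl_union_self _, disjoint_compl_left, ?_, ?_⟩
    · intro u
      rw [hbot]
      have hbu : ((⊥ : SimpleGraph ↥({x}ᶜ : Set V)).induce u) = ⊥ := by
        ext c d
        simp [SimpleGraph.comap]
      rw [hbu]
      exact bot_chrom_eq_cliqueNum _
    · have h1 : (G.induce ({x} : Set V)).cliqueNum ≤ 1 := by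
        haveI : Fintype ↥({x} : Set V) := Fintype.ofFinite _
        have hc := cliqueNum_le_card (G.induce ({x} : Set V))
        have hcard : Fintype.card ↥({x} : Set V) = 1 := by simp
        omega
      have h2 : 2 ≤ (G.induce (Set.univ : Set V)).cliqueNum := by
        haveI : Fintype ↥(Set.univ : Set V) := Fintype.ofFinite _
        have hclq : (G.induce (Set.univ : Set V)).IsClique ↑({a, b} : Finset ↥(Set.univ : Set V)) := by
          intro u hu v hv huv
          simp only [Finset.coe_insert, Finset.coe_singleton, Set.mem_insert_iff,
            Set.mem_singleton_iff] at hu hv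
          rcases hu with rfl | rfl <;> rcases hv with rfl | rfl
          · exact absurd rfl huv
          · exact hab
          · exact hab.symm
          · exact absurd rfl huv
        have hle := SimpleGraph.IsClique.card_le_cliqueNum (tc := hclq)
        rwa [Finset.card_pair hab.ne] at hle
      omega
end

section
/- The chromatic number of a k-divisible graph G is at most k^(ω(G) − 1), i.e., χ(G) ≤ k^(ω(G)−1) for every k-divisible graph G. -/
open SimpleGraph

/-- A graph `G` with at least one edge is `k`-divisible if the vertex set of every
induced subgraph `H` of `G` with at least one edge can be partitioned into `k` sets,
none of which contains a largest clique of `H`. -/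
def KDivisible {W : Type*} (k : ℕ) (G : SimpleGraph W) : Prop :=
  G.edgeSet.Nonempty ∧ ∀ s : Set W, (G.induce s).edgeSet.Nonempty →
    ∃ P : Fin k → Set W, (⋃ i, P i) = s ∧ Pairwise (Function.onFun Disjoint P) ∧
      ∀ i, (G.induce (P i)).cliqueNum < (G.induce s).cliqueNum


lemma adj_of_edgeSet_nonempty_s10 {α : Type*} {H : SimpleGraph α} (he : H.edgeSet.Nonempty) :
    ∃ a b, H.Adj a b := by
  obtain ⟨e, he⟩ := he
  revert he
  refine Sym2.ind (fun a b h => ⟨a, b, h⟩) e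

lemma two_le_cliqueNum_of_edge {α : Type*} [Fintype α] {H : SimpleGraph α}
    (he : H.edgeSet.Nonempty) : 2 ≤ H.cliqueNum := by
  classical
  obtain ⟨a, b, hab⟩ := adj_of_edgeSet_nonempty_s10 he
  have hc : H.IsClique ({a, b} : Finset α) := by
    simp only [Finset.coe_insert, Finset.coe_singleton]
    exact isClique_pair.mpr fun _ => hab
  have := @SimpleGraph.IsClique.card_le_cliqueNum _ H _ _ hc
  rwa [Finset.card_pair hab.ne] at this

lemma cliqueNum_induce_le {V : Type*} [Fintype V] (G : SimpleGraph V) (s : Set V) :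
    (G.induce s).cliqueNum ≤ G.cliqueNum := by
  classical
  haveI : Fintype ↥s := Fintype.ofFinite _
  obtain ⟨t, ht⟩ := (G.induce s).exists_isNClique_cliqueNum
  have hcl : G.IsClique ((t.image Subtype.val : Finset V) : Set V) := by
    intro x hx y hy hxy
    simp only [Finset.coe_image, Set.mem_image, Finset.mem_coe] at hx hy
    obtain ⟨x', hx', rfl⟩ := hx
    obtain ⟨y', hy', rfl⟩ := hy
    have hne : x' ≠ y' := fun h => hxy (by rw [h])
    exact ht.isClique hx' hy' hne
  have := @SimpleGraph.IsClique.card_le_cliqueNum _ G _ _ hcl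
  rwa [Finset.card_image_of_injective _ Subtype.val_injective, ht.card_eq] at this

lemma colorable_aux {V : Type*} [Fintype V] (k : ℕ) (G : SimpleGraph V) (hk : 1 ≤ k)
    (hdiv : ∀ s : Set V, (G.induce s).edgeSet.Nonempty →
      ∃ P : Fin k → Set V, (⋃ i, P i) = s ∧ Pairwise (Function.onFun Disjoint P) ∧
        ∀ i, (G.induce (P i)).cliqueNum < (G.induce s).cliqueNum) :
    ∀ n (s : Set V), (G.induce s).cliqueNum ≤ n → (G.induce s).Colorable (k ^ (n - 1)) := by
  classical
  intro n
  induction n with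
  | zero =>
    intro s hs
    have hne : ¬ (G.induce s).edgeSet.Nonempty := by
      intro he
      haveI : Fintype ↥s := Fintype.ofFinite _
      have := two_le_cliqueNum_of_edge he
      omega
    rw [Set.not_nonempty_iff_eq_empty, edgeSet_eq_empty] at hne
    have : (G.induce s).Colorable 1 := by
      refine ⟨SimpleGraph.Coloring.mk (fun _ => 0) ?_⟩
      intro v w hvw
      rw [hne] at hvw
      exact absurd hvw (by simp)
    simpa using this
  | succ n ih =>
    intro s hs
    by_cases he : (G.induce s).edgeSet.Nonempty
    · obtain ⟨P, hPu, hPd, hPlt⟩ := hdiv s he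
      have hn1 : 1 ≤ n := by
        haveI : Fintype ↥s := Fintype.ofFinite _
        have := two_le_cliqueNum_of_edge he
        omega
      have hcol : ∀ i, (G.induce (P i)).Colorable (k ^ (n - 1)) := fun i =>
        ih (P i) (by have := hPlt i; omega)
      set m := k ^ (n - 1) with hm
      have hmpos : 0 < m := Nat.pow_pos hk
      have c : ∀ i, (G.induce (P i)).Coloring (Fin m) := fun i => (hcol i).some
      -- total color functions on V
      let d : Fin k → V → Fin m := fun i v =>
        if h : v ∈ P i then c i ⟨v, h⟩ else ⟨0, hmpos⟩
      have hmem : ∀ v : ↥s, ∃ i, (v : V) ∈ P i := by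
        intro v
        have hv : (v : V) ∈ ⋃ i, P i := hPu ▸ v.2
        simpa using hv
      choose idx hidx using hmem
      have C : (G.induce s).Coloring (Fin k × Fin m) := by
        refine SimpleGraph.Coloring.mk (fun v => (idx v, d (idx v) v)) ?_
        intro v w hvw heq
        have hadj : G.Adj v w := hvw
        have h1 : idx v = idx w := congrArg Prod.fst heq
        have h2 : d (idx v) v = d (idx w) w := congrArg Prod.snd heq
        rw [← h1] at h2
        have hwmem : (w : V) ∈ P (idx v) := h1 ▸ hidx w
        have hadj' : (G.induce (P (idx v))).Adj ⟨v, hidx v⟩ ⟨w, hwmem⟩ := hadj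
        have := (c (idx v)).valid hadj'
        apply this
        have e1 : d (idx v) v = c (idx v) ⟨v, hidx v⟩ := dif_pos (hidx v)
        have e2 : d (idx v) w = c (idx v) ⟨w, hwmem⟩ := dif_pos hwmem
        rw [e1, e2] at h2
        exact h2
      have hcard : (G.induce s).Colorable (k * m) := by
        have := C.colorable
        simpa using this
      have : k * m = k ^ n := by
        rw [hm, ← pow_succ']
        congr 1
        omega
      rw [this] at hcard
      simpa using hcard
    · rw [Set.not_nonempty_iff_eq_empty, edgeSet_eq_empty] at he
      have h1 : (G.induce s).Colorable 1 := by
        refine ⟨SimpleGraph.Coloring.mk (fun _ => 0) ?_⟩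
        intro v w hvw
        rw [he] at hvw
        exact absurd hvw (by simp)
      exact h1.mono (Nat.one_le_pow _ _ hk)

theorem chromatic_le_pow_of_kDivisible' {V : Type*} [Fintype V]
    (k : ℕ) (G : SimpleGraph V)
    (h : G.edgeSet.Nonempty ∧ ∀ s : Set V, (G.induce s).edgeSet.Nonempty →
    ∃ P : Fin k → Set V, (⋃ i, P i) = s ∧ Pairwise (Function.onFun Disjoint P) ∧
      ∀ i, (G.induce (P i)).cliqueNum < (G.induce s).cliqueNum) :
    G.chromaticNumber ≤ (k ^ (G.cliqueNum - 1) : ℕ) := by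
  obtain ⟨hE, hdiv⟩ := h
  obtain ⟨a, b, hab⟩ := adj_of_edgeSet_nonempty_s10 hE
  have hadjU : (G.induce (Set.univ : Set V)).Adj ⟨a, trivial⟩ ⟨b, trivial⟩ := hab
  have eU : (G.induce (Set.univ : Set V)).edgeSet.Nonempty :=
    ⟨s(⟨a, trivial⟩, ⟨b, trivial⟩), hadjU⟩
  rcases Nat.eq_zero_or_pos k with rfl | hk
  · exfalso
    obtain ⟨P, hPu, -, -⟩ := hdiv Set.univ eU
    have : (⋃ i : Fin 0, P i) = (∅ : Set V) := by simp
    rw [this] at hPu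
    exact absurd (hPu ▸ Set.mem_univ a) (by simp [← hPu])
  · have hc := colorable_aux k G hk hdiv ((G.induce (Set.univ : Set V)).cliqueNum) Set.univ le_rfl
    have hG : G.Colorable (k ^ ((G.induce (Set.univ : Set V)).cliqueNum - 1)) :=
      Colorable.of_hom (G.induceUnivIso).symm.toEmbedding.toHom hc
    refine le_trans hG.chromaticNumber_le ?_
    exact_mod_cast Nat.pow_le_pow_right hk
      (Nat.sub_le_sub_right (cliqueNum_induce_le G Set.univ) 1)

/-- The chromatic number of a `k`-divisible graph `G` is at most `k ^ (ω(G) - 1)`. -/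
theorem chromatic_le_pow_of_kDivisible {V : Type*} [Fintype V]
    (k : ℕ) (G : SimpleGraph V) (h : KDivisible k G) :
    G.chromaticNumber ≤ (k ^ (G.cliqueNum - 1) : ℕ) := by
  exact chromatic_le_pow_of_kDivisible' k G h
end

section
/- If G is a graph whose independence number satisfies α(G) ≤ 2 (G is 3K1-free), then G is perfectly divisible. -/
open SimpleGraph

lemma my_cliqueNum_le_chromaticNumber {X : Type*} [Fintype X] (H : SimpleGraph X) :
    (H.cliqueNum : ℕ∞) ≤ H.chromaticNumber := by
  obtain ⟨s, hs⟩ := H.exists_isNClique_cliqueNum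
  have hcol := H.colorable_chromaticNumber_of_fintype
  have hle := hs.isClique.card_le_of_colorable hcol
  rw [hs.card_eq] at hle
  have hne : H.chromaticNumber ≠ ⊤ := by
    rw [chromaticNumber_ne_top_iff_exists]; exact ⟨_, H.colorable_of_fintype⟩
  calc (H.cliqueNum : ℕ∞) ≤ ((H.chromaticNumber.toNat : ℕ) : ℕ∞) := by exact_mod_cast hle
    _ = H.chromaticNumber := ENat.coe_toNat hne

lemma my_perfect_of_support_clique {X : Type*} [Fintype X]
    (H : SimpleGraph X) (h : H.IsClique H.support) :
    H.chromaticNumber = (H.cliqueNum : ℕ∞) := by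
  classical
  refine le_antisymm ?_ (my_cliqueNum_le_chromaticNumber H)
  rw [chromaticNumber_le_iff_colorable]
  cases isEmpty_or_nonempty X with
  | inl hempty => exact Colorable.of_isEmpty (G := H) _
  | inr hne =>
    obtain ⟨x₀⟩ := hne
    have h1 : 1 ≤ H.cliqueNum := by
      have hc : H.IsClique ({x₀} : Finset X) := by
        simp [SimpleGraph.isClique_iff, Set.Pairwise]
      simpa using hc.card_le_cliqueNum
    set K : Finset X := H.support.toFinset with hK
    by_cases hKe : K = ∅
    · have hcol1 : H.Colorable 1 := by
        refine ⟨⟨fun _ => 0, ?_⟩⟩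
        intro a b hab hc
        have ha : a ∈ H.support := ⟨b, hab⟩
        have : a ∈ K := by simp [hK, ha]
        simp [hKe] at this
      exact hcol1.mono h1
    · obtain ⟨k₀, hk₀⟩ := Finset.nonempty_of_ne_empty hKe
      have hcolK : H.Colorable (Fintype.card ↥(K : Finset X)) := by
        refine Coloring.colorable ⟨fun x => if hx : x ∈ K then ⟨x, hx⟩ else ⟨k₀, hk₀⟩, ?_⟩
        intro a b hab hc
        have ha : a ∈ K := by simp [hK, SimpleGraph.mem_support]; exact ⟨b, hab⟩
        have hb : b ∈ K := by
          simp [hK, SimpleGraph.mem_support]; exact ⟨a, hab.symm⟩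
        simp only [dif_pos ha, dif_pos hb] at hc
        exact hab.ne (congrArg Subtype.val hc)
      have hcard : Fintype.card ↥(K : Finset X) = K.card := Fintype.card_coe K
      have hKclique : H.IsClique (K : Set X) := by
        have : (K : Set X) = H.support := by simp [hK]
        rw [this]; exact h
      have hKle : K.card ≤ H.cliqueNum := hKclique.card_le_cliqueNum
      rw [hcard] at hcolK
      exact hcolK.mono hKle

/-- A graph with independence number at most 2 (i.e. a `3K₁`-free graph, whose
complement has no 3-clique) is perfectly divisible. -/
theorem perfectlyDivisible_of_indepNum_le_two {V : Type*} [Fintype V]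
    (G : SimpleGraph V) (halpha : Gᶜ.CliqueFree 3) :
    PerfectlyDivisible G := by
  classical
  intro s hse
  have hsne : s.Nonempty := by
    obtain ⟨e, he⟩ := hse
    induction e using Sym2.ind with
    | _ a b => exact ⟨a.1, a.2⟩
  obtain ⟨v, hv⟩ := hsne
  refine ⟨{x | x ∈ s ∧ ¬ G.Adj v x}, {x | x ∈ s ∧ G.Adj v x}, ?_, ?_, ?_, ?_⟩
  · ext x; by_cases hx : G.Adj v x <;> simp [hx]
  · rw [Set.disjoint_left]; rintro x ⟨-, hx⟩ ⟨-, hx'⟩; exact hx hx'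
  · -- IsPerfect
    intro t
    haveI : Fintype ↥t := Fintype.ofFinite _
    apply my_perfect_of_support_clique
    intro x hx y hy hxy
    obtain ⟨xw, hxw⟩ := hx
    obtain ⟨yw, hyw⟩ := hy
    simp only [comap_adj, Function.Embedding.coe_subtype, Set.mem_setOf_eq] at hxw hyw ⊢
    by_contra hnot
    have hxA := x.1.2
    have hyA := y.1.2
    have hxv : (x : V) ≠ v := by
      intro h
      rw [h] at hxw
      exact xw.1.2.2 hxw
    have hyv : (y : V) ≠ v := by
      intro h
      rw [h] at hyw
      exact yw.1.2.2 hyw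
    have hxyv : (x : V) ≠ (y : V) := by
      intro h
      exact hxy (Subtype.ext (Subtype.ext h))
    exact halpha {v, (x : V), (y : V)} (is3Clique_triple_iff.2
      ⟨⟨hxv.symm, hxA.2⟩, ⟨hyv.symm, hyA.2⟩, ⟨hxyv, hnot⟩⟩)
  · -- cliqueNum strictly smaller
    set B : Set V := {x | x ∈ s ∧ G.Adj v x} with hB
    haveI : Fintype ↥B := Fintype.ofFinite _
    haveI : Fintype ↥s := Fintype.ofFinite _
    obtain ⟨C, hC⟩ := (G.induce B).exists_isNClique_cliqueNum
    let f : ↥B ↪ ↥s := ⟨fun x => ⟨x.1, x.2.1⟩, by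
      intro a b h
      simp only [Subtype.mk.injEq] at h
      exact Subtype.ext h⟩
    have hvnot : (⟨v, hv⟩ : ↥s) ∉ C.map f := by
      simp only [Finset.mem_map]
      rintro ⟨a, -, ha⟩
      have : (a : V) = v := congrArg Subtype.val ha
      exact G.irrefl (this ▸ a.2.2)
    have hclique : (G.induce s).IsClique (↑(insert (⟨v, hv⟩ : ↥s) (C.map f)) : Set ↥s) := by
      intro a ha b hb hab
      simp only [Finset.coe_insert, Set.mem_insert_iff, Finset.coe_map,
        Set.mem_image, Finset.mem_coe] at ha hb
      simp only [comap_adj, Function.Embedding.coe_subtype]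
      rcases ha with rfl | ⟨a', ha', rfl⟩ <;> rcases hb with rfl | ⟨b', hb', rfl⟩
      · exact absurd rfl hab
      · exact b'.2.2
      · exact a'.2.2.symm
      · have hab' : a' ≠ b' := by
          intro h; exact hab (by rw [h])
        have := hC.isClique ha' hb' hab'
        exact this
    have hcard : (insert (⟨v, hv⟩ : ↥s) (C.map f)).card = (G.induce B).cliqueNum + 1 := by
      rw [Finset.card_insert_of_notMem hvnot, Finset.card_map, hC.card_eq]
    have hle : (insert (⟨v, hv⟩ : ↥s) (C.map f)).card ≤ (G.induce s).cliqueNum :=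
      hclique.card_le_cliqueNum
    omega
end
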